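/- arXiv:2507.06114 — 6 statements merged into one kernel-verified Lean document; each statement's English description precedes it below -/
import Mathlib

section
/- (Measurement stability.) Let α > 0 and S ⊆ Ω be measurable. Let y^δ ∈ Y, let (y_k) ⊆ Y with y_k → y^δ in Y, and for each k let x_k ∈ D(F) be a minimizer of J_{α,S,y_k} over D(F). Then (x_k) has a subsequence converging strongly in L²(Ω), and every strong limit of a convergent subsequence of (x_k) is a minimizer of J_{α,S,y^δ} over D(F). -/
open MeasureTheory Filter
open scoped RealInnerProductSpace ENNReal Topology

noncomputable section
set_option linter.unnecessarySimpa false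

/-- Weak sequential convergence in a real inner product space. -/
def WeakConv {H : Type*} [NormedAddCommGroup H] [InnerProductSpace ℝ H]
    (u : ℕ → H) (x : H) : Prop :=
  ∀ z : H, Tendsto (fun k => ⟪u k, z⟫) atTop (𝓝 ⟪x, z⟫)

/-- The squared `L²` mass of (a representative of) `x : L²(Ω)` over the set `T`. -/
def sqInt {n : ℕ} (Ω : Set (Fin n → ℝ)) (T : Set (Fin n → ℝ))
    (x : Lp ℝ 2 (volume.restrict Ω)) : ℝ :=
  ∫ t in T, (x t) ^ 2 ∂(volume.restrict Ω)

/-- The Tikhonov-type functional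
`J_{α,S,z}(x) = ‖F(x) − z‖² + α‖x − x*‖_{S⁺}² + ‖x − x*‖_{S⁻}²`. -/
def J {n : ℕ} (Ω : Set (Fin n → ℝ)) {Y : Type*} [NormedAddCommGroup Y]
    [InnerProductSpace ℝ Y]
    (F : Lp ℝ 2 (volume.restrict Ω) → Y) (xstar : Lp ℝ 2 (volume.restrict Ω))
    (α : ℝ) (S : Set (Fin n → ℝ)) (z : Y) (x : Lp ℝ 2 (volume.restrict Ω)) : ℝ :=
  ‖F x - z‖ ^ 2 + (α * sqInt Ω S (x - xstar) + sqInt Ω (Ω \ S) (x - xstar))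

/-- `x` is a minimizer of the functional `Jf` over the set `D`. -/
def IsMinimizer {X' : Type*} (Jf : X' → ℝ) (D : Set X') (x : X') : Prop :=
  x ∈ D ∧ ∀ x' ∈ D, Jf x ≤ Jf x'

/-! ### Auxiliary lemmas -/

namespace MsAux

variable {X : Type*} [MeasurableSpace X] {μ : Measure X}

lemma integrable_mul (f g : Lp ℝ 2 μ) : Integrable (fun a => f a * g a) μ := by
  have h := MeasureTheory.L2.integrable_inner (𝕜 := ℝ) f g
  simpa [RCLike.inner_apply, starRingEnd_apply, star_trivial, mul_comm] using h

lemma inner_eq_integral (f g : Lp ℝ 2 μ) : ⟪f, g⟫ = ∫ a, f a * g a ∂μ := by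
  rw [MeasureTheory.L2.inner_def]
  simp only [RCLike.inner_apply, starRingEnd_apply, star_trivial]
  exact integral_congr_ae (Eventually.of_forall fun a => mul_comm _ _)

/-- The Lp element obtained by multiplying `w` by the indicator of `T`. -/
def indLp {T : Set X} (hT : MeasurableSet T) (w : Lp ℝ 2 μ) : Lp ℝ 2 μ :=
  ((Lp.memLp w).indicator hT).toLp (T.indicator w)

lemma indLp_coe {T : Set X} (hT : MeasurableSet T) (w : Lp ℝ 2 μ) :
    (indLp hT w : Lp ℝ 2 μ) =ᵐ[μ] T.indicator w :=
  MemLp.coeFn_toLp _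

lemma inner_indLp {T : Set X} (hT : MeasurableSet T) (v w : Lp ℝ 2 μ) :
    ⟪v, indLp hT w⟫ = ∫ a in T, v a * w a ∂μ := by
  rw [inner_eq_integral]
  have h1 : (fun a => v a * (indLp hT w) a) =ᵐ[μ] fun a => v a * T.indicator w a :=
    (indLp_coe hT w).mono fun a ha => by dsimp only; rw [ha]
  rw [integral_congr_ae h1]
  have h2 : (fun a => v a * T.indicator w a) = T.indicator (fun a => v a * w a) := by
    funext a
    by_cases ha : a ∈ T <;> simp [ha]
  rw [h2, integral_indicator hT]

lemma inner_indLp_symm {T : Set X} (hT : MeasurableSet T) (v w : Lp ℝ 2 μ) :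
    ⟪v, indLp hT w⟫ = ⟪w, indLp hT v⟫ := by
  rw [inner_indLp, inner_indLp]
  exact integral_congr_ae (Eventually.of_forall fun a => mul_comm _ _)

lemma indLp_sub {T : Set X} (hT : MeasurableSet T) (w w' : Lp ℝ 2 μ) :
    indLp hT (w - w') = indLp hT w - indLp hT w' := by
  apply ext_inner_left ℝ
  intro v
  rw [inner_sub_right, inner_indLp, inner_indLp, inner_indLp]
  have h1 : (fun a => v a * (w - w') a) =ᵐ[μ.restrict T]
      fun a => v a * w a - v a * w' a := by
    filter_upwards [ae_restrict_of_ae (Lp.coeFn_sub w w')] with a ha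
    rw [ha, Pi.sub_apply, mul_sub]
  rw [integral_congr_ae h1, integral_sub ((integrable_mul v w).restrict)
    ((integrable_mul v w').restrict)]

lemma norm_indLp_le {T : Set X} (hT : MeasurableSet T) (w : Lp ℝ 2 μ) :
    ‖indLp hT w‖ ≤ ‖w‖ := by
  have h1 : ⟪indLp hT w, indLp hT w⟫ = ∫ a in T, w a * w a ∂μ := by
    rw [inner_indLp_symm, inner_indLp]
    refine integral_congr_ae ?_
    filter_upwards [ae_restrict_of_ae (indLp_coe hT w), ae_restrict_mem hT] with a ha hmem
    rw [ha, Set.indicator_of_mem hmem]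
  have h2 : (∫ a in T, w a * w a ∂μ) ≤ ∫ a, w a * w a ∂μ :=
    setIntegral_le_integral (integrable_mul w w)
      (Eventually.of_forall fun a => mul_self_nonneg _)
  have h3 : ‖indLp hT w‖ ^ 2 ≤ ‖w‖ ^ 2 := by
    rw [← real_inner_self_eq_norm_sq, ← real_inner_self_eq_norm_sq, h1, inner_eq_integral]
    exact h2
  nlinarith [norm_nonneg (indLp hT w), norm_nonneg w]

end MsAux

/-- A bounded sequence in a real Hilbert space has a weakly convergent subsequence. -/
lemma exists_weak_subseq {H : Type*} [NormedAddCommGroup H] [InnerProductSpace ℝ H]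
    [CompleteSpace H] (u : ℕ → H) (C : ℝ) (hC : ∀ k, ‖u k‖ ≤ C) :
    ∃ φ : ℕ → ℕ, StrictMono φ ∧ ∃ x : H, WeakConv (u ∘ φ) x := by
  have hC0 : 0 ≤ C := le_trans (norm_nonneg (u 0)) (hC 0)
  have hib : ∀ k z, |⟪u k, z⟫| ≤ C * ‖z‖ := by
    intro k z
    calc |⟪u k, z⟫| ≤ ‖u k‖ * ‖z‖ := abs_real_inner_le_norm _ _
    _ ≤ C * ‖z‖ := by gcongr; exact hC k
  set Kc : Set (ℕ → ℝ) := Set.univ.pi (fun j => Set.Icc (-(C * ‖u j‖)) (C * ‖u j‖)) with hKc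
  have hKcomp : IsCompact Kc := isCompact_univ_pi fun j => isCompact_Icc
  have hvK : ∀ k, (fun j => ⟪u k, u j⟫) ∈ Kc := by
    intro k j _
    exact abs_le.mp (hib k (u j))
  obtain ⟨g, -, φ, hφ, hconv⟩ := hKcomp.isSeqCompact hvK
  have hconv' : ∀ j, Tendsto (fun k => ⟪u (φ k), u j⟫) atTop (𝓝 (g j)) := by
    intro j
    exact (tendsto_pi_nhds.mp hconv) j
  refine ⟨φ, hφ, ?_⟩
  set Z : Set H := {z : H | ∃ L : ℝ, Tendsto (fun k => ⟪u (φ k), z⟫) atTop (𝓝 L)} with hZ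
  have hZu : ∀ j, u j ∈ Z := fun j => ⟨g j, hconv' j⟩
  have hZspan : (Submodule.span ℝ (Set.range u) : Set H) ⊆ Z := by
    intro z hz
    induction hz using Submodule.span_induction with
    | mem z hz => obtain ⟨j, rfl⟩ := hz; exact hZu j
    | zero => exact ⟨0, by simpa using tendsto_const_nhds (x := (0:ℝ))⟩
    | add z w hz hw hLz hLw =>
        obtain ⟨L1, h1⟩ := hLz; obtain ⟨L2, h2⟩ := hLw
        exact ⟨L1 + L2, by simpa [inner_add_right] using h1.add h2⟩
    | smul a z hz hLz =>
        obtain ⟨L1, h1⟩ := hLz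
        exact ⟨a * L1, by simpa [real_inner_smul_right] using h1.const_mul a⟩
  have hZclosure : closure (Submodule.span ℝ (Set.range u) : Set H) ⊆ Z := by
    intro z hz
    have hcauchy : CauchySeq (fun k => ⟪u (φ k), z⟫) := by
      rw [Metric.cauchySeq_iff]
      intro ε hε
      obtain ⟨w, hwmem, hwz⟩ := Metric.mem_closure_iff.mp hz (ε / (4 * (C + 1)))
        (by positivity)
      obtain ⟨L, hL⟩ := hZspan hwmem
      have hcw : CauchySeq (fun k => ⟪u (φ k), w⟫) := hL.cauchySeq
      obtain ⟨N, hN⟩ := Metric.cauchySeq_iff.mp hcw (ε / 2) (by positivity)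
      refine ⟨N, fun m hm k hk => ?_⟩
      have hzw : ∀ i, |⟪u (φ i), z⟫ - ⟪u (φ i), w⟫| ≤ C * ‖z - w‖ := by
        intro i
        rw [← inner_sub_right]
        exact hib _ _
      have hCz : C * ‖z - w‖ < ε / 4 := by
        have h1 : ‖z - w‖ < ε / (4 * (C + 1)) := by
          rw [← dist_eq_norm]; exact hwz
        have ht : (0:ℝ) < ε / (4 * (C + 1)) := by positivity
        have h3 : C * (ε / (4 * (C + 1))) < (C + 1) * (ε / (4 * (C + 1))) := by nlinarith
        have h4 : (C + 1) * (ε / (4 * (C + 1))) = ε / 4 := by field_simp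
        have h5 : C * ‖z - w‖ ≤ C * (ε / (4 * (C + 1))) := by
          apply mul_le_mul_of_nonneg_left (le_of_lt h1) hC0
        linarith
      have hNmk := hN m hm k hk
      rw [Real.dist_eq] at hNmk ⊢
      calc |⟪u (φ m), z⟫ - ⟪u (φ k), z⟫|
          ≤ |⟪u (φ m), z⟫ - ⟪u (φ m), w⟫| + |⟪u (φ m), w⟫ - ⟪u (φ k), w⟫|
            + |⟪u (φ k), w⟫ - ⟪u (φ k), z⟫| := by
            linarith [abs_sub_le (⟪u (φ m), z⟫) (⟪u (φ m), w⟫) (⟪u (φ k), z⟫),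
              abs_sub_le (⟪u (φ m), w⟫) (⟪u (φ k), w⟫) (⟪u (φ k), z⟫)]
      _ < ε / 4 + ε / 2 + ε / 4 := by
            refine add_lt_add (add_lt_add ?_ hNmk) ?_
            · exact lt_of_le_of_lt (hzw m) hCz
            · rw [abs_sub_comm]; exact lt_of_le_of_lt (hzw k) hCz
      _ = ε := by ring
    obtain ⟨L, hL⟩ := cauchySeq_tendsto_of_complete hcauchy
    exact ⟨L, hL⟩
  set K' : Submodule ℝ H := (Submodule.span ℝ (Set.range u)).topologicalClosure with hK'
  haveI : CompleteSpace K' :=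
    (Submodule.span ℝ (Set.range u)).isClosed_topologicalClosure.completeSpace_coe
  have hZall : ∀ z : H, ∃ L : ℝ, Tendsto (fun k => ⟪u (φ k), z⟫) atTop (𝓝 L) := by
    intro z
    have hPz : ((K'.orthogonalProjectionOnto z : K') : H) ∈ Z := by
      apply hZclosure
      rw [← Submodule.topologicalClosure_coe]
      exact SetLike.coe_mem _
    obtain ⟨L, hL⟩ := hPz
    refine ⟨L, ?_⟩
    have heq : ∀ k, ⟪u (φ k), z⟫ = ⟪u (φ k), ((K'.orthogonalProjectionOnto z : K') : H)⟫ := by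
      intro k
      have hmem : u (φ k) ∈ K' :=
        Submodule.le_topologicalClosure _ (Submodule.subset_span ⟨φ k, rfl⟩)
      have horth := Submodule.sub_starProjection_mem_orthogonal (K := K') z
      have : ⟪u (φ k), z - ((K'.orthogonalProjectionOnto z : K') : H)⟫ = 0 :=
        horth _ hmem
      rw [inner_sub_right] at this
      linarith
    simpa only [heq] using hL
  choose L hL using hZall
  have hadd : ∀ z w, L (z + w) = L z + L w := by
    intro z w
    refine tendsto_nhds_unique ?_ ((hL z).add (hL w))
    simpa [inner_add_right] using hL (z + w)
  have hsmul : ∀ (a : ℝ) z, L (a • z) = a * L z := by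
    intro a z
    refine tendsto_nhds_unique ?_ ((hL z).const_mul a)
    simpa [real_inner_smul_right] using hL (a • z)
  have hbound : ∀ z, |L z| ≤ C * ‖z‖ := by
    intro z
    have : Tendsto (fun k => |⟪u (φ k), z⟫|) atTop (𝓝 |L z|) := (hL z).abs
    exact le_of_tendsto this (Eventually.of_forall fun k => hib _ _)
  set lmap : H →ₗ[ℝ] ℝ :=
    { toFun := L
      map_add' := hadd
      map_smul' := fun a z => hsmul a z } with hlmap
  set clm : H →L[ℝ] ℝ := lmap.mkContinuous C (fun z => by
    rw [Real.norm_eq_abs]; exact hbound z) with hclm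
  refine ⟨(InnerProductSpace.toDual ℝ H).symm clm, fun z => ?_⟩
  have : ⟪(InnerProductSpace.toDual ℝ H).symm clm, z⟫ = clm z :=
    InnerProductSpace.toDual_symm_apply
  rw [this]
  exact hL z

/-- Weak lower semicontinuity of the squared norm, in an `∀ᶠ` form. -/
lemma weak_lsc_sq {H : Type*} [NormedAddCommGroup H] [InnerProductSpace ℝ H]
    {v : ℕ → H} {x : H}
    (hv : Tendsto (fun k => ⟪v k, x⟫) atTop (𝓝 ⟪x, x⟫)) {ε : ℝ} (hε : 0 < ε) :
    ∀ᶠ k in atTop, ‖x‖ ^ 2 - ε ≤ ‖v k‖ ^ 2 := by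
  have h1 : Tendsto (fun k => 2 * ⟪v k, x⟫ - ‖x‖ ^ 2) atTop (𝓝 (‖x‖ ^ 2)) := by
    have h2 := (hv.const_mul 2).sub_const (‖x‖ ^ 2)
    rw [real_inner_self_eq_norm_sq] at h2
    convert h2 using 2
    ring
  filter_upwards [h1.eventually_const_le (show ‖x‖ ^ 2 - ε < ‖x‖ ^ 2 by linarith)] with k hk
  have h3 := norm_sub_sq_real (v k) x
  nlinarith [sq_nonneg ‖v k - x‖]

section Bform

variable {n : ℕ} {Ω S : Set (Fin n → ℝ)}

/-- The weighted bilinear form `B(v,w) = α∫_S vw + ∫_{Ω∖S} vw`, realized as an inner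
product against a fixed bounded multiplication operator. -/
def Bform (hΩ : MeasurableSet Ω) (hS : MeasurableSet S) (α : ℝ)
    (v w : Lp ℝ 2 (volume.restrict Ω)) : ℝ :=
  ⟪v, α • MsAux.indLp hS w + MsAux.indLp (hΩ.diff hS) w⟫

lemma Bform_def (hΩ : MeasurableSet Ω) (hS : MeasurableSet S) (α : ℝ) (v w : Lp ℝ 2 (volume.restrict Ω)) :
    Bform hΩ hS α v w = α * (∫ a in S, v a * w a ∂(volume.restrict Ω))
      + ∫ a in Ω \ S, v a * w a ∂(volume.restrict Ω) := by
  unfold Bform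
  rw [inner_add_right, real_inner_smul_right, MsAux.inner_indLp, MsAux.inner_indLp]

lemma Bform_symm (hΩ : MeasurableSet Ω) (hS : MeasurableSet S) (α : ℝ) (v w : Lp ℝ 2 (volume.restrict Ω)) :
    Bform hΩ hS α v w = Bform hΩ hS α w v := by
  rw [Bform_def, Bform_def]
  congr 1
  · congr 1
    exact integral_congr_ae (Eventually.of_forall fun a => mul_comm _ _)
  · exact integral_congr_ae (Eventually.of_forall fun a => mul_comm _ _)

lemma sqInt_eq (T : Set (Fin n → ℝ)) (x : Lp ℝ 2 (volume.restrict Ω)) :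
    sqInt Ω T x = ∫ a in T, x a * x a ∂(volume.restrict Ω) := by
  unfold sqInt
  exact integral_congr_ae (Eventually.of_forall fun a => pow_two _)

lemma sqInt_nonneg (T : Set (Fin n → ℝ)) (x : Lp ℝ 2 (volume.restrict Ω)) :
    0 ≤ sqInt Ω T x :=
  integral_nonneg fun t => sq_nonneg _

lemma Bform_sqInt (hΩ : MeasurableSet Ω) (hS : MeasurableSet S) (α : ℝ) (x : Lp ℝ 2 (volume.restrict Ω)) :
    α * sqInt Ω S x + sqInt Ω (Ω \ S) x = Bform hΩ hS α x x := by
  rw [Bform_def, sqInt_eq, sqInt_eq]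

lemma Bform_nonneg (hΩ : MeasurableSet Ω) (hS : MeasurableSet S) {α : ℝ} (hα : 0 < α) (x : Lp ℝ 2 (volume.restrict Ω)) :
    0 ≤ Bform hΩ hS α x x := by
  rw [← Bform_sqInt]
  have h1 := sqInt_nonneg (Ω := Ω) S x
  have h2 := sqInt_nonneg (Ω := Ω) (Ω \ S) x
  nlinarith

lemma sqInt_add_sqInt (hΩ : MeasurableSet Ω) (hS : MeasurableSet S) (hSΩ : S ⊆ Ω) (x : Lp ℝ 2 (volume.restrict Ω)) :
    sqInt Ω S x + sqInt Ω (Ω \ S) x = ‖x‖ ^ 2 := by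
  rw [sqInt_eq, sqInt_eq, ← real_inner_self_eq_norm_sq, MsAux.inner_eq_integral,
    ← setIntegral_union Set.disjoint_sdiff_right (hΩ.diff hS)
      ((MsAux.integrable_mul x x).restrict) ((MsAux.integrable_mul x x).restrict),
    Set.union_diff_cancel hSΩ]
  have h : (volume.restrict Ω).restrict Ω = volume.restrict Ω := by
    rw [Measure.restrict_restrict hΩ, Set.inter_self]
  rw [h]

lemma Bform_coercive (hΩ : MeasurableSet Ω) (hS : MeasurableSet S) {α : ℝ} (hα : 0 < α) (hSΩ : S ⊆ Ω) (x : Lp ℝ 2 (volume.restrict Ω)) :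
    min α 1 * ‖x‖ ^ 2 ≤ Bform hΩ hS α x x := by
  rw [← Bform_sqInt, ← sqInt_add_sqInt hΩ hS hSΩ x]
  have h1 := sqInt_nonneg (Ω := Ω) S x
  have h2 := sqInt_nonneg (Ω := Ω) (Ω \ S) x
  have hma : min α 1 ≤ α := min_le_left _ _
  have hm1 : min α 1 ≤ 1 := min_le_right _ _
  nlinarith

lemma Bform_expand (hΩ : MeasurableSet Ω) (hS : MeasurableSet S) (α : ℝ) (v w : Lp ℝ 2 (volume.restrict Ω)) :
    Bform hΩ hS α (v - w) (v - w)
      = Bform hΩ hS α v v - 2 * Bform hΩ hS α v w + Bform hΩ hS α w w := by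
  have hsymm := Bform_symm hΩ hS α w v
  unfold Bform at *
  rw [MsAux.indLp_sub, MsAux.indLp_sub, smul_sub]
  have hM : α • MsAux.indLp hS v - α • MsAux.indLp hS w
      + (MsAux.indLp (hΩ.diff hS) v - MsAux.indLp (hΩ.diff hS) w)
      = (α • MsAux.indLp hS v + MsAux.indLp (hΩ.diff hS) v)
        - (α • MsAux.indLp hS w + MsAux.indLp (hΩ.diff hS) w) := by
    abel
  rw [hM, inner_sub_left, inner_sub_right, inner_sub_right]
  linarith

lemma Bform_bound (hΩ : MeasurableSet Ω) (hS : MeasurableSet S) {α : ℝ} (hα : 0 < α) (v w : Lp ℝ 2 (volume.restrict Ω)) :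
    |Bform hΩ hS α v w| ≤ (α + 1) * ‖v‖ * ‖w‖ := by
  have hMn : ‖α • MsAux.indLp hS w + MsAux.indLp (hΩ.diff hS) w‖ ≤ (α + 1) * ‖w‖ := by
    calc ‖α • MsAux.indLp hS w + MsAux.indLp (hΩ.diff hS) w‖
        ≤ ‖α • MsAux.indLp hS w‖ + ‖MsAux.indLp (hΩ.diff hS) w‖ := norm_add_le _ _
    _ = α * ‖MsAux.indLp hS w‖ + ‖MsAux.indLp (hΩ.diff hS) w‖ := by
        rw [norm_smul, Real.norm_eq_abs, abs_of_pos hα]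
    _ ≤ α * ‖w‖ + ‖w‖ := by
        gcongr
        · exact MsAux.norm_indLp_le _ _
        · exact MsAux.norm_indLp_le _ _
    _ = (α + 1) * ‖w‖ := by ring
  calc |Bform hΩ hS α v w| ≤ ‖v‖ * ‖α • MsAux.indLp hS w + MsAux.indLp (hΩ.diff hS) w‖ :=
        abs_real_inner_le_norm _ _
  _ ≤ ‖v‖ * ((α + 1) * ‖w‖) := by
        have := norm_nonneg v
        gcongr
  _ = (α + 1) * ‖v‖ * ‖w‖ := by ring

lemma Bform_weak (hΩ : MeasurableSet Ω) (hS : MeasurableSet S) (α : ℝ) {v : ℕ → Lp ℝ 2 (volume.restrict Ω)} {x : Lp ℝ 2 (volume.restrict Ω)}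
    (hv : WeakConv v x) (w : Lp ℝ 2 (volume.restrict Ω)) :
    Tendsto (fun k => Bform hΩ hS α (v k) w) atTop (𝓝 (Bform hΩ hS α x w)) :=
  hv (α • MsAux.indLp hS w + MsAux.indLp (hΩ.diff hS) w)

end Bform

/-- **Measurement stability** (Theorem A.1): if `y_k → y^δ` and `x_k` minimizes
`J_{α,S,y_k}` over `D(F)`, then `(x_k)` has a strongly convergent subsequence in
`L²(Ω)`, and every strong limit of a convergent subsequence of `(x_k)` is a
minimizer of `J_{α,S,y^δ}` over `D(F)`. -/
theorem measurement_stability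
    {n : ℕ} (Ω : Set (Fin n → ℝ)) (hΩmeas : MeasurableSet Ω)
    (hΩbdd : Bornology.IsBounded Ω)
    {Y : Type*} [NormedAddCommGroup Y] [InnerProductSpace ℝ Y] [CompleteSpace Y]
    (D : Set (Lp ℝ 2 (volume.restrict Ω))) (hD : D.Nonempty)
    (F : Lp ℝ 2 (volume.restrict Ω) → Y)
    (hFcont : ContinuousOn F D)
    (hFweak : ∀ (u : ℕ → Lp ℝ 2 (volume.restrict Ω))
      (x : Lp ℝ 2 (volume.restrict Ω)) (z : Y),
      (∀ k, u k ∈ D) → WeakConv u x → WeakConv (fun k => F (u k)) z →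
        x ∈ D ∧ F x = z)
    (xstar : Lp ℝ 2 (volume.restrict Ω))
    (α : ℝ) (hα : 0 < α)
    (S : Set (Fin n → ℝ)) (hSmeas : MeasurableSet S) (hSΩ : S ⊆ Ω)
    (yδ : Y) (ys : ℕ → Y) (hys : Tendsto ys atTop (𝓝 yδ))
    (xs : ℕ → Lp ℝ 2 (volume.restrict Ω))
    (hxs : ∀ k, IsMinimizer (J Ω F xstar α S (ys k)) D (xs k)) :
    (∃ φ : ℕ → ℕ, StrictMono φ ∧
      ∃ xbar : Lp ℝ 2 (volume.restrict Ω), Tendsto (xs ∘ φ) atTop (𝓝 xbar)) ∧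
    (∀ (φ : ℕ → ℕ), StrictMono φ →
      ∀ xbar : Lp ℝ 2 (volume.restrict Ω), Tendsto (xs ∘ φ) atTop (𝓝 xbar) →
        IsMinimizer (J Ω F xstar α S yδ) D xbar) := by
  classical
  obtain ⟨x₀, hx₀⟩ := hD
  set Bf : Lp ℝ 2 (volume.restrict Ω) → Lp ℝ 2 (volume.restrict Ω) → ℝ :=
    Bform hΩmeas hSmeas α with hBdef
  have hBsq : ∀ x : Lp ℝ 2 (volume.restrict Ω),
      α * sqInt Ω S x + sqInt Ω (Ω \ S) x = Bf x x := fun x =>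
    Bform_sqInt hΩmeas hSmeas α x
  have hBnn : ∀ x, 0 ≤ Bf x x := fun x => Bform_nonneg hΩmeas hSmeas hα x
  have hBexp : ∀ v w, Bf (v - w) (v - w) = Bf v v - 2 * Bf v w + Bf w w := fun v w =>
    Bform_expand hΩmeas hSmeas α v w
  have hBwk : ∀ {v : ℕ → Lp ℝ 2 (volume.restrict Ω)} {x : Lp ℝ 2 (volume.restrict Ω)},
      WeakConv v x → ∀ w, Tendsto (fun k => Bf (v k) w) atTop (𝓝 (Bf x w)) :=
    fun hv w => Bform_weak hΩmeas hSmeas α hv w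
  -- rewrite of the functional
  have hJeq : ∀ (z : Y) (x : Lp ℝ 2 (volume.restrict Ω)),
      J Ω F xstar α S z x = ‖F x - z‖ ^ 2 + Bf (x - xstar) (x - xstar) := by
    intro z x
    unfold J
    rw [hBsq]
  -- minimality in the rewritten form
  have hmin : ∀ k, ∀ x' ∈ D, ‖F (xs k) - ys k‖ ^ 2 + Bf (xs k - xstar) (xs k - xstar)
      ≤ ‖F x' - ys k‖ ^ 2 + Bf (x' - xstar) (x' - xstar) := by
    intro k x' hx'
    have h := (hxs k).2 x' hx'
    rwa [hJeq, hJeq] at h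
  -- uniform bounds
  obtain ⟨Cy, hCy⟩ := hys.norm.bddAbove_range
  have hCy' : ∀ k, ‖ys k‖ ≤ Cy := fun k => hCy (Set.mem_range_self k)
  set R : ℝ := (‖F x₀‖ + Cy) ^ 2 + Bf (x₀ - xstar) (x₀ - xstar) with hRdef
  have hRb : ∀ k, ‖F (xs k) - ys k‖ ^ 2 + Bf (xs k - xstar) (xs k - xstar) ≤ R := by
    intro k
    refine le_trans (hmin k x₀ hx₀) ?_
    have h0 : (0:ℝ) ≤ ‖F x₀‖ + Cy := by
      have := norm_nonneg (ys k); have := hCy' k; have := norm_nonneg (F x₀); linarith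
    have h1 : ‖F x₀ - ys k‖ ≤ ‖F x₀‖ + Cy :=
      le_trans (norm_sub_le _ _) (by linarith [hCy' k])
    have h2 : ‖F x₀ - ys k‖ ^ 2 ≤ (‖F x₀‖ + Cy) ^ 2 := by
      nlinarith [norm_nonneg (F x₀ - ys k)]
    rw [hRdef]
    linarith
  have hA_le_R : ∀ k, ‖F (xs k) - ys k‖ ^ 2 ≤ R := by
    intro k
    have := hRb k; have := hBnn (xs k - xstar); linarith
  have hP_le_R : ∀ k, Bf (xs k - xstar) (xs k - xstar) ≤ R := by
    intro k
    have := hRb k; have := sq_nonneg ‖F (xs k) - ys k‖; linarith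
  set m : ℝ := min α 1 with hmdef
  have hm0 : (0:ℝ) < m := lt_min hα one_pos
  have hcoer : ∀ x : Lp ℝ 2 (volume.restrict Ω), m * ‖x‖ ^ 2 ≤ Bf x x := fun x =>
    Bform_coercive hΩmeas hSmeas hα hSΩ x
  -- bound for xs
  set Cx : ℝ := ‖xstar‖ + Real.sqrt (R / m) with hCxdef
  have hCx : ∀ k, ‖xs k‖ ≤ Cx := by
    intro k
    have h1 : m * ‖xs k - xstar‖ ^ 2 ≤ R := le_trans (hcoer _) (hP_le_R k)
    have h2 : ‖xs k - xstar‖ ^ 2 ≤ R / m := by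
      rw [le_div_iff₀ hm0]; linarith [h1]
    have h3 : ‖xs k - xstar‖ ≤ Real.sqrt (R / m) := by
      rw [← Real.sqrt_sq (norm_nonneg (xs k - xstar))]
      exact Real.sqrt_le_sqrt h2
    calc ‖xs k‖ = ‖xstar + (xs k - xstar)‖ := by rw [add_sub_cancel]
    _ ≤ ‖xstar‖ + ‖xs k - xstar‖ := norm_add_le _ _
    _ ≤ Cx := by rw [hCxdef]; linarith
  -- bound for F ∘ xs
  set CF : ℝ := Real.sqrt R + Cy with hCFdef
  have hCF : ∀ k, ‖F (xs k)‖ ≤ CF := by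
    intro k
    have h1 : ‖F (xs k) - ys k‖ ≤ Real.sqrt R := by
      rw [← Real.sqrt_sq (norm_nonneg (F (xs k) - ys k))]
      exact Real.sqrt_le_sqrt (hA_le_R k)
    calc ‖F (xs k)‖ = ‖F (xs k) - ys k + ys k‖ := by rw [sub_add_cancel]
    _ ≤ ‖F (xs k) - ys k‖ + ‖ys k‖ := norm_add_le _ _
    _ ≤ CF := by rw [hCFdef]; linarith [hCy' k]
  -- the key argument along a weakly convergent subsequence
  have key : ∀ (σ : ℕ → ℕ), StrictMono σ →
      ∀ (xb : Lp ℝ 2 (volume.restrict Ω)) (z : Y),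
      WeakConv (fun k => xs (σ k)) xb → WeakConv (fun k => F (xs (σ k))) z →
      F xb = z →
      (∀ x' ∈ D, ‖F xb - yδ‖ ^ 2 + Bf (xb - xstar) (xb - xstar)
          ≤ ‖F x' - yδ‖ ^ 2 + Bf (x' - xstar) (x' - xstar)) ∧
      (xb ∈ D → Tendsto (fun k => Bf (xs (σ k) - xstar) (xs (σ k) - xstar)) atTop
        (𝓝 (Bf (xb - xstar) (xb - xstar)))) := by
    intro σ hσ xb z hxbw hFzw hFxb
    have hyσ : Tendsto (fun k => ys (σ k)) atTop (𝓝 yδ) := hys.comp hσ.tendsto_atTop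
    -- weak convergence of the residuals
    have hvw : ∀ w : Y, Tendsto (fun k => ⟪F (xs (σ k)) - ys (σ k), w⟫) atTop
        (𝓝 ⟪F xb - yδ, w⟫) := by
      intro w
      have h1 : Tendsto (fun k => ⟪F (xs (σ k)), w⟫) atTop (𝓝 ⟪F xb, w⟫) := by
        rw [hFxb]; exact hFzw w
      have h2 : Tendsto (fun k => ⟪ys (σ k), w⟫) atTop (𝓝 ⟪yδ, w⟫) :=
        hyσ.inner tendsto_const_nhds
      simpa [inner_sub_left] using h1.sub h2
    -- weak convergence of the shifted sequence
    have hshift : WeakConv (fun k => xs (σ k) - xstar) (xb - xstar) := by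
      intro w
      simpa [inner_sub_left] using (hxbw w).sub (tendsto_const_nhds (x := ⟪xstar, w⟫))
    -- lower semicontinuity of the data-misfit term
    have hA_lsc : ∀ ε : ℝ, 0 < ε → ∀ᶠ k in atTop,
        ‖F xb - yδ‖ ^ 2 - ε ≤ ‖F (xs (σ k)) - ys (σ k)‖ ^ 2 := by
      intro ε hε
      exact weak_lsc_sq (hvw (F xb - yδ)) hε
    -- lower semicontinuity of the penalty
    have hP_lsc : ∀ ε : ℝ, 0 < ε → ∀ᶠ k in atTop,
        Bf (xb - xstar) (xb - xstar) - ε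
          ≤ Bf (xs (σ k) - xstar) (xs (σ k) - xstar) := by
      intro ε hε
      have h1 : Tendsto (fun k => 2 * Bf (xs (σ k) - xstar) (xb - xstar)
          - Bf (xb - xstar) (xb - xstar)) atTop (𝓝 (Bf (xb - xstar) (xb - xstar))) := by
        have h2 := ((hBwk hshift (xb - xstar)).const_mul 2).sub_const
          (Bf (xb - xstar) (xb - xstar))
        convert h2 using 2
        ring
      filter_upwards [h1.eventually_const_le
        (show Bf (xb - xstar) (xb - xstar) - ε < Bf (xb - xstar) (xb - xstar) by
          linarith)] with k hk
      have h3 := hBexp (xs (σ k) - xstar) (xb - xstar)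
      have h4 := hBnn (xs (σ k) - xstar - (xb - xstar))
      linarith
    -- convergence of the upper bounds
    have hRHS : ∀ x' : Lp ℝ 2 (volume.restrict Ω),
        Tendsto (fun k => ‖F x' - ys (σ k)‖ ^ 2 + Bf (x' - xstar) (x' - xstar)) atTop
          (𝓝 (‖F x' - yδ‖ ^ 2 + Bf (x' - xstar) (x' - xstar))) := by
      intro x'
      have h1 : Tendsto (fun k => F x' - ys (σ k)) atTop (𝓝 (F x' - yδ)) :=
        tendsto_const_nhds.sub hyσ
      exact ((h1.norm.pow 2).add_const _)
    constructor
    · intro x' hx'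
      by_contra hc
      push_neg at hc
      set ε : ℝ := (‖F xb - yδ‖ ^ 2 + Bf (xb - xstar) (xb - xstar)
        - (‖F x' - yδ‖ ^ 2 + Bf (x' - xstar) (x' - xstar))) / 4 with hεdef
      have hε : 0 < ε := by rw [hεdef]; linarith
      have e1 := hA_lsc ε hε
      have e2 := hP_lsc ε hε
      have e3 : ∀ᶠ k in atTop, ‖F x' - ys (σ k)‖ ^ 2 + Bf (x' - xstar) (x' - xstar)
          ≤ ‖F x' - yδ‖ ^ 2 + Bf (x' - xstar) (x' - xstar) + ε :=
        (hRHS x').eventually_le_const (by linarith)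
      obtain ⟨k, h1, h2, h3⟩ := (e1.and (e2.and e3)).exists
      have h4 := hmin (σ k) x' hx'
      rw [hεdef] at h1 h2 h3
      linarith
    · intro hxbD
      rw [Metric.tendsto_atTop]
      intro ε hε
      have hε4 : 0 < ε / 4 := by linarith
      have e1 := hA_lsc (ε / 4) hε4
      have e2 := hP_lsc (ε / 4) hε4
      have e3 : ∀ᶠ k in atTop, ‖F xb - ys (σ k)‖ ^ 2 + Bf (xb - xstar) (xb - xstar)
          ≤ ‖F xb - yδ‖ ^ 2 + Bf (xb - xstar) (xb - xstar) + ε / 4 :=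
        (hRHS xb).eventually_le_const (by linarith)
      obtain ⟨N, hN⟩ := eventually_atTop.mp ((e1.and (e2.and e3)))
      refine ⟨N, fun k hk => ?_⟩
      obtain ⟨h1, h2, h3⟩ := hN k hk
      have h5 := hmin (σ k) xb hxbD
      rw [Real.dist_eq, abs_lt]
      constructor <;> linarith
  -- Part 2: every strong limit of a convergent subsequence is a minimizer
  have part2 : ∀ (φ : ℕ → ℕ), StrictMono φ →
      ∀ xbar : Lp ℝ 2 (volume.restrict Ω), Tendsto (xs ∘ φ) atTop (𝓝 xbar) →
        IsMinimizer (J Ω F xstar α S yδ) D xbar := by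
    intro φ hφ xbar hconv
    obtain ⟨φ₂, hφ₂, z2, hz2⟩ := exists_weak_subseq (fun k => F (xs (φ k))) CF
      (fun k => hCF (φ k))
    have hσ : StrictMono (φ ∘ φ₂) := hφ.comp hφ₂
    have hconvσ : Tendsto (fun k => xs ((φ ∘ φ₂) k)) atTop (𝓝 xbar) :=
      hconv.comp hφ₂.tendsto_atTop
    have hwσ : WeakConv (fun k => xs ((φ ∘ φ₂) k)) xbar := fun w =>
      hconvσ.inner tendsto_const_nhds
    have hFwσ : WeakConv (fun k => F (xs ((φ ∘ φ₂) k))) z2 := fun w => hz2 w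
    obtain ⟨hxbarD, hFxbar⟩ := hFweak (fun k => xs ((φ ∘ φ₂) k)) xbar z2
      (fun k => (hxs ((φ ∘ φ₂) k)).1) hwσ hFwσ
    obtain ⟨hminb, -⟩ := key (φ ∘ φ₂) hσ xbar z2 hwσ hFwσ hFxbar
    refine ⟨hxbarD, fun x' hx' => ?_⟩
    rw [hJeq, hJeq]
    exact hminb x' hx'
  refine ⟨?_, part2⟩
  -- Part 1: existence of a strongly convergent subsequence
  obtain ⟨φ₁, hφ₁, x1, hx1w⟩ := exists_weak_subseq xs Cx hCx
  obtain ⟨φ₂, hφ₂, zz, hzzw⟩ := exists_weak_subseq (fun k => F (xs (φ₁ k))) CF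
    (fun k => hCF (φ₁ k))
  have hψ : StrictMono (φ₁ ∘ φ₂) := hφ₁.comp hφ₂
  have hxsw : WeakConv (fun k => xs ((φ₁ ∘ φ₂) k)) x1 := fun w =>
    (hx1w w).comp hφ₂.tendsto_atTop
  have hFzw : WeakConv (fun k => F (xs ((φ₁ ∘ φ₂) k))) zz := fun w => hzzw w
  obtain ⟨hx1D, hFx1⟩ := hFweak (fun k => xs ((φ₁ ∘ φ₂) k)) x1 zz
    (fun k => (hxs ((φ₁ ∘ φ₂) k)).1) hxsw hFzw
  obtain ⟨-, hPtend⟩ := key (φ₁ ∘ φ₂) hψ x1 zz hxsw hFzw hFx1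
  have hPtend' := hPtend hx1D
  have hshift : WeakConv (fun k => xs ((φ₁ ∘ φ₂) k) - xstar) (x1 - xstar) := by
    intro w
    simpa [inner_sub_left] using (hxsw w).sub (tendsto_const_nhds (x := ⟪xstar, w⟫))
  have hBw : Tendsto (fun k => Bf (xs ((φ₁ ∘ φ₂) k) - xstar) (x1 - xstar)) atTop
      (𝓝 (Bf (x1 - xstar) (x1 - xstar))) := hBwk hshift (x1 - xstar)
  have hdiff : Tendsto (fun k => Bf (xs ((φ₁ ∘ φ₂) k) - x1) (xs ((φ₁ ∘ φ₂) k) - x1))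
      atTop (𝓝 0) := by
    have hexp : ∀ k, Bf (xs ((φ₁ ∘ φ₂) k) - x1) (xs ((φ₁ ∘ φ₂) k) - x1) =
        Bf (xs ((φ₁ ∘ φ₂) k) - xstar) (xs ((φ₁ ∘ φ₂) k) - xstar)
        - 2 * Bf (xs ((φ₁ ∘ φ₂) k) - xstar) (x1 - xstar)
        + Bf (x1 - xstar) (x1 - xstar) := by
      intro k
      have h := hBexp (xs ((φ₁ ∘ φ₂) k) - xstar) (x1 - xstar)
      rw [sub_sub_sub_cancel_right] at h
      exact h
    have h1 := (hPtend'.sub (hBw.const_mul 2)).add_const (Bf (x1 - xstar) (x1 - xstar))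
    have h2 : Tendsto (fun k => Bf (xs ((φ₁ ∘ φ₂) k) - xstar) (xs ((φ₁ ∘ φ₂) k) - xstar)
        - 2 * Bf (xs ((φ₁ ∘ φ₂) k) - xstar) (x1 - xstar)
        + Bf (x1 - xstar) (x1 - xstar)) atTop (𝓝 0) := by
      convert h1 using 2
      ring
    exact h2.congr fun k => (hexp k).symm
  have hnormsq : Tendsto (fun k => ‖xs ((φ₁ ∘ φ₂) k) - x1‖ ^ 2) atTop (𝓝 0) := by
    have hub : ∀ k, ‖xs ((φ₁ ∘ φ₂) k) - x1‖ ^ 2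
        ≤ Bf (xs ((φ₁ ∘ φ₂) k) - x1) (xs ((φ₁ ∘ φ₂) k) - x1) / m := by
      intro k
      rw [le_div_iff₀ hm0]
      have := hcoer (xs ((φ₁ ∘ φ₂) k) - x1)
      linarith
    have hlb : ∀ k, (0:ℝ) ≤ ‖xs ((φ₁ ∘ φ₂) k) - x1‖ ^ 2 := fun k => sq_nonneg _
    have hdm : Tendsto (fun k =>
        Bf (xs ((φ₁ ∘ φ₂) k) - x1) (xs ((φ₁ ∘ φ₂) k) - x1) / m) atTop (𝓝 0) := by
      have := hdiff.div_const m
      simpa using this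
    exact tendsto_of_tendsto_of_tendsto_of_le_of_le tendsto_const_nhds hdm hlb hub
  have hnorm : Tendsto (fun k => ‖xs ((φ₁ ∘ φ₂) k) - x1‖) atTop (𝓝 0) := by
    have h := hnormsq.sqrt
    rw [Real.sqrt_zero] at h
    exact h.congr fun k => Real.sqrt_sq (norm_nonneg _)
  refine ⟨φ₁ ∘ φ₂, hψ, x1, ?_⟩
  rw [tendsto_iff_norm_sub_tendsto_zero]
  exact hnorm
end
end

section
/- (Regularization stability.) Let α > 0, y^δ ∈ Y, and let S, S_k ⊆ Ω be measurable sets such that the weight functions f_{S_k,α} converge to f_{S,α} in L²(Ω), where f_{T,α}(λ) := √α for λ ∈ T and f_{T,α}(λ) := 1 for λ ∈ Ω∖T. For each k let x_k ∈ D(F) be a minimizer of J_{α,S_k,y^δ} over D(F). Then (x_k) has a subsequence converging strongly in L²(Ω), and every strong limit of a convergent subsequence of (x_k) is a minimizer of J_{α,S,y^δ} over D(F). -/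
open MeasureTheory Filter
open scoped RealInnerProductSpace ENNReal Topology Classical

noncomputable section

/-- The weight function `f_{T,α}`, equal to `√α` on `T` and `1` off `T`. -/
def weight {n : ℕ} (α : ℝ) (T : Set (Fin n → ℝ)) : (Fin n → ℝ) → ℝ :=
  fun t => if t ∈ T then Real.sqrt α else 1

namespace RegStab
variable {H : Type*} [NormedAddCommGroup H] [InnerProductSpace ℝ H]

lemma weakConv_comp {u : ℕ → H} {x : H} (h : WeakConv u x) {φ : ℕ → ℕ} (hφ : StrictMono φ) :
    WeakConv (u ∘ φ) x := fun z => (h z).comp hφ.tendsto_atTop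

lemma weakConv_of_tendsto {u : ℕ → H} {x : H} (h : Tendsto u atTop (𝓝 x)) :
    WeakConv u x := fun z => h.inner tendsto_const_nhds

lemma weakConv_sub_const {u : ℕ → H} {x : H} (h : WeakConv u x) (c : H) :
    WeakConv (fun k => u k - c) (x - c) := by
  intro z
  simpa only [inner_sub_left] using (h z).sub (tendsto_const_nhds (x := ⟪c, z⟫))

lemma weak_bw [CompleteSpace H] (u : ℕ → H) (C : ℝ) (hu : ∀ k, ‖u k‖ ≤ C) :
    ∃ φ : ℕ → ℕ, StrictMono φ ∧ ∃ x : H, WeakConv (u ∘ φ) x := by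
  have hC0 : 0 ≤ C := le_trans (norm_nonneg _) (hu 0)
  set V : Submodule ℝ H := (Submodule.span ℝ (Set.range u)).topologicalClosure with hVdef
  haveI : CompleteSpace V := (Submodule.isClosed_topologicalClosure _).completeSpace_coe
  have huV : ∀ k, u k ∈ V := fun k =>
    Submodule.le_topologicalClosure _ (Submodule.subset_span (Set.mem_range_self k))
  have hsep : TopologicalSpace.IsSeparable (V : Set H) := by
    have h1 := ((Set.countable_range u).isSeparable).span (R := ℝ)
    have h2 := h1.closure
    rw [hVdef]
    rw [Submodule.topologicalClosure_coe]
    exact h2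
  obtain ⟨c, hc_count, hc_sub⟩ := hsep
  have hc_ne : c.Nonempty := by
    rcases Set.eq_empty_or_nonempty c with rfl | h
    · exfalso
      have := hc_sub V.zero_mem
      simpa using this
    · exact h
  obtain ⟨e, hce⟩ := hc_count.exists_eq_range hc_ne
  -- diagonal extraction via compactness of a product of intervals
  have hvK : ∀ k, (fun i => ⟪u k, e i⟫) ∈
      Set.pi Set.univ (fun i => Set.Icc (-(C * ‖e i‖)) (C * ‖e i‖)) := by
    intro k i _
    have h1 : |⟪u k, e i⟫| ≤ ‖u k‖ * ‖e i‖ := abs_real_inner_le_norm _ _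
    have h2 : ‖u k‖ * ‖e i‖ ≤ C * ‖e i‖ := mul_le_mul_of_nonneg_right (hu k) (norm_nonneg _)
    have h3 := abs_le.mp (h1.trans h2)
    exact ⟨h3.1, h3.2⟩
  have hK : IsCompact (Set.pi Set.univ fun i => Set.Icc (-(C * ‖e i‖)) (C * ‖e i‖)) :=
    isCompact_univ_pi fun i => isCompact_Icc
  obtain ⟨g, -, φ, hφ, hconv⟩ := hK.isSeqCompact fun k => hvK k
  have hpt : ∀ i, Tendsto (fun k => ⟪u (φ k), e i⟫) atTop (𝓝 (g i)) := fun i =>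
    (tendsto_pi_nhds.mp hconv i)
  -- Cauchy at every test vector
  have hCauchy : ∀ z : H, CauchySeq fun k => ⟪u (φ k), z⟫ := by
    intro z
    have horth : z - (V.orthogonalProjection z : H) ∈ Vᗮ :=
      V.sub_starProjection_mem_orthogonal z
    have hwz : ∀ j, ⟪u j, z⟫ = ⟪u j, (V.orthogonalProjection z : H)⟫ := by
      intro j
      have h0 : ⟪u j, z - (V.orthogonalProjection z : H)⟫ = 0 :=
        (Submodule.mem_orthogonal V _).mp horth _ (huV j)
      rw [inner_sub_right] at h0
      linarith
    rw [Metric.cauchySeq_iff]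
    intro ε hε
    have hε4 : 0 < ε / (4 * (C + 1)) := by positivity
    -- approximate the projection by an element of the countable dense family
    have hwV : (V.orthogonalProjection z : H) ∈ closure c :=
      hc_sub (V.orthogonalProjection z).2
    obtain ⟨b, hbc, hbd⟩ := Metric.mem_closure_iff.mp hwV _ hε4
    obtain ⟨i, rfl⟩ := by rw [hce] at hbc; exact hbc
    have hci : CauchySeq fun k => ⟪u (φ k), e i⟫ := (hpt i).cauchySeq
    obtain ⟨N, hN⟩ := Metric.cauchySeq_iff.mp hci (ε / 2) (by positivity)
    refine ⟨N, fun m hm m' hm' => ?_⟩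
    have key : ∀ j, |⟪u j, (V.orthogonalProjection z : H)⟫ - ⟪u j, e i⟫| ≤ ε / 4 := by
      intro j
      have h1 : ⟪u j, (V.orthogonalProjection z : H)⟫ - ⟪u j, e i⟫
          = ⟪u j, (V.orthogonalProjection z : H) - e i⟫ := (inner_sub_right _ _ _).symm
      rw [h1]
      have h2 : |⟪u j, (V.orthogonalProjection z : H) - e i⟫|
          ≤ ‖u j‖ * ‖(V.orthogonalProjection z : H) - e i‖ := abs_real_inner_le_norm _ _
      have h3 : ‖(V.orthogonalProjection z : H) - e i‖ < ε / (4 * (C + 1)) := by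
        rw [← dist_eq_norm]; exact hbd
      have h4 : ‖u j‖ * ‖(V.orthogonalProjection z : H) - e i‖
          ≤ C * ‖(V.orthogonalProjection z : H) - e i‖ :=
        mul_le_mul_of_nonneg_right (hu j) (norm_nonneg _)
      have h5 : C * ‖(V.orthogonalProjection z : H) - e i‖ ≤ C * (ε / (4 * (C + 1))) :=
        mul_le_mul_of_nonneg_left h3.le hC0
      have h6 : C * (ε / (4 * (C + 1))) ≤ ε / 4 := by
        rw [div_mul_eq_div_div]
        rw [mul_div_assoc']
        rw [div_le_div_iff₀ (by positivity) (by norm_num)]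
        ring_nf
        nlinarith
      linarith [h2.trans (h4.trans (h5.trans h6))]
    have hd := hN m hm m' hm'
    rw [Real.dist_eq] at hd ⊢
    rw [hwz (φ m), hwz (φ m')]
    have k1 := key (φ m)
    have k2 := key (φ m')
    have : ⟪u (φ m), (V.orthogonalProjection z : H)⟫ - ⟪u (φ m'), (V.orthogonalProjection z : H)⟫
        = (⟪u (φ m), (V.orthogonalProjection z : H)⟫ - ⟪u (φ m), e i⟫)
          + (⟪u (φ m), e i⟫ - ⟪u (φ m'), e i⟫)
          + (⟪u (φ m'), e i⟫ - ⟪u (φ m'), (V.orthogonalProjection z : H)⟫) := by ring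
    rw [this]
    obtain ⟨a1, a2⟩ := abs_le.mp k1
    obtain ⟨b1, b2⟩ := abs_le.mp k2
    obtain ⟨c1, c2⟩ := abs_lt.mp hd
    rw [abs_lt]
    constructor <;> linarith
  -- limit functional
  have hL : ∀ z : H, Tendsto (fun k => ⟪u (φ k), z⟫) atTop
      (𝓝 (limUnder atTop fun k => ⟪u (φ k), z⟫)) := fun z => (hCauchy z).tendsto_limUnder
  set L : H → ℝ := fun z => limUnder atTop fun k => ⟪u (φ k), z⟫ with hLdef
  have hadd : ∀ y z : H, L (y + z) = L y + L z := fun y z =>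
    tendsto_nhds_unique (hL (y + z)) (by
      simpa only [inner_add_right] using (hL y).add (hL z))
  have hsmul : ∀ (a : ℝ) (z : H), L (a • z) = a * L z := fun a z =>
    tendsto_nhds_unique (hL (a • z)) (by
      simpa only [real_inner_smul_right] using (hL z).const_mul a)
  have hbound : ∀ z : H, ‖L z‖ ≤ C * ‖z‖ := by
    intro z
    rw [Real.norm_eq_abs]
    refine le_of_tendsto (hL z).abs (Eventually.of_forall fun k => ?_)
    exact (abs_real_inner_le_norm _ _).trans
      (mul_le_mul_of_nonneg_right (hu (φ k)) (norm_nonneg _))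
  let ℒ : H →L[ℝ] ℝ :=
    LinearMap.mkContinuous
      { toFun := L, map_add' := hadd, map_smul' := hsmul } C hbound
  refine ⟨φ, hφ, (InnerProductSpace.toDual ℝ H).symm ℒ, fun z => ?_⟩
  have hx : ⟪(InnerProductSpace.toDual ℝ H).symm ℒ, z⟫ = ℒ z :=
    InnerProductSpace.toDual_symm_apply
  rw [hx]
  exact hL z

variable {X : Type*} [MeasurableSpace X] {μ : Measure X}

lemma integrable_sq (u : Lp ℝ 2 μ) : Integrable (fun t => (u t) ^ 2) μ := by
  have h := MeasureTheory.L2.integrable_inner (𝕜 := ℝ) u u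
  refine h.congr (Eventually.of_forall fun t => ?_)
  simp [RCLike.inner_apply, sq]

lemma inner_eq (u v : Lp ℝ 2 μ) : ⟪u, v⟫ = ∫ t, u t * v t ∂μ := by
  rw [MeasureTheory.L2.inner_def]
  refine integral_congr_ae (Eventually.of_forall fun t => ?_)
  simp [RCLike.inner_apply, mul_comm]

lemma norm_sq_eq (u : Lp ℝ 2 μ) : ‖u‖ ^ 2 = ∫ t, (u t) ^ 2 ∂μ := by
  rw [← real_inner_self_eq_norm_sq, inner_eq]
  exact integral_congr_ae (Eventually.of_forall fun t => (sq (u t)).symm)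

lemma inner_eq' (u v : Lp ℝ 2 μ) {f g : X → ℝ} (hf : ⇑u =ᵐ[μ] f) (hg : ⇑v =ᵐ[μ] g) :
    ⟪u, v⟫ = ∫ t, f t * g t ∂μ := by
  rw [inner_eq]
  refine integral_congr_ae ?_
  filter_upwards [hf, hg] with t h1 h2
  rw [h1, h2]

lemma norm_sq_eq' (u : Lp ℝ 2 μ) {f : X → ℝ} (hf : ⇑u =ᵐ[μ] f) :
    ‖u‖ ^ 2 = ∫ t, (f t) ^ 2 ∂μ := by
  rw [norm_sq_eq]
  refine integral_congr_ae ?_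
  filter_upwards [hf] with t h1
  rw [h1]

/-- Multiplication of an `L²` element by an `L∞` function. -/
def Mop (g : X → ℝ) (hg : MemLp g ∞ μ) (u : Lp ℝ 2 μ) : Lp ℝ 2 μ :=
  (MemLp.smul (r := 2) (Lp.memLp u) hg).toLp (g • ⇑u)

lemma Mop_ae (g : X → ℝ) (hg : MemLp g ∞ μ) (u : Lp ℝ 2 μ) :
    ⇑(Mop g hg u) =ᵐ[μ] fun t => g t * u t := by
  filter_upwards [MemLp.coeFn_toLp (MemLp.smul (r := 2) (Lp.memLp u) hg)] with t ht
  simpa [Mop, Pi.smul_apply', smul_eq_mul] using ht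

lemma Mop_sub_ae (g : X → ℝ) (hg : MemLp g ∞ μ) (u v : Lp ℝ 2 μ) :
    ⇑(Mop g hg u - Mop g hg v) =ᵐ[μ] fun t => g t * (u t - v t) := by
  filter_upwards [Lp.coeFn_sub (Mop g hg u) (Mop g hg v), Mop_ae g hg u, Mop_ae g hg v]
    with t h1 h2 h3
  rw [h1, Pi.sub_apply, h2, h3]; ring

lemma Mop_norm_sq (g : X → ℝ) (hg : MemLp g ∞ μ) (u : Lp ℝ 2 μ) :
    ‖Mop g hg u‖ ^ 2 = ∫ t, (g t * u t) ^ 2 ∂μ :=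
  norm_sq_eq' _ (Mop_ae g hg u)

lemma Mop_norm_le (g : X → ℝ) (hg : MemLp g ∞ μ) (u : Lp ℝ 2 μ) {β : ℝ}
    (hβ : 0 ≤ β) (hb : ∀ t, |g t| ≤ β) : ‖Mop g hg u‖ ≤ β * ‖u‖ := by
  have h2 : ‖Mop g hg u‖ ^ 2 ≤ (β * ‖u‖) ^ 2 := by
    rw [Mop_norm_sq, mul_pow, norm_sq_eq, ← integral_const_mul]
    refine integral_mono_of_nonneg (Eventually.of_forall fun t => sq_nonneg _)
      ((integrable_sq u).const_mul _) (Eventually.of_forall fun t => ?_)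
    show (g t * u t) ^ 2 ≤ β ^ 2 * (u t) ^ 2
    have hgt : (g t) ^ 2 ≤ β ^ 2 := by have := abs_le.mp (hb t); nlinarith
    rw [mul_pow]
    exact mul_le_mul_of_nonneg_right hgt (sq_nonneg _)
  calc ‖Mop g hg u‖ = √(‖Mop g hg u‖ ^ 2) := (Real.sqrt_sq (norm_nonneg _)).symm
  _ ≤ √((β * ‖u‖) ^ 2) := Real.sqrt_le_sqrt h2
  _ = β * ‖u‖ := Real.sqrt_sq (by positivity)

lemma Mop_norm_sub_le (g : X → ℝ) (hg : MemLp g ∞ μ) (u v : Lp ℝ 2 μ) {β : ℝ}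
    (hβ : 0 ≤ β) (hb : ∀ t, |g t| ≤ β) : ‖Mop g hg u - Mop g hg v‖ ≤ β * ‖u - v‖ := by
  have h2 : ‖Mop g hg u - Mop g hg v‖ ^ 2 ≤ (β * ‖u - v‖) ^ 2 := by
    rw [norm_sq_eq' _ (Mop_sub_ae g hg u v), mul_pow,
      norm_sq_eq' _ (Lp.coeFn_sub u v), ← integral_const_mul]
    refine integral_mono_of_nonneg (Eventually.of_forall fun t => sq_nonneg _)
      (((integrable_sq (u - v)).congr ?_).const_mul _) (Eventually.of_forall fun t => ?_)
    · filter_upwards [Lp.coeFn_sub u v] with t ht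
      rw [ht]
    · show (g t * (u t - v t)) ^ 2 ≤ β ^ 2 * ((⇑u - ⇑v) t) ^ 2
      have hgt : (g t) ^ 2 ≤ β ^ 2 := by have := abs_le.mp (hb t); nlinarith
      rw [mul_pow, Pi.sub_apply]
      exact mul_le_mul_of_nonneg_right hgt (sq_nonneg _)
  calc ‖Mop g hg u - Mop g hg v‖ = √(‖Mop g hg u - Mop g hg v‖ ^ 2) :=
      (Real.sqrt_sq (norm_nonneg _)).symm
  _ ≤ √((β * ‖u - v‖) ^ 2) := Real.sqrt_le_sqrt h2
  _ = β * ‖u - v‖ := Real.sqrt_sq (by positivity)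

lemma Mop_selfadj (g : X → ℝ) (hg : MemLp g ∞ μ) (u v : Lp ℝ 2 μ) :
    ⟪Mop g hg u, v⟫ = ⟪u, Mop g hg v⟫ := by
  rw [inner_eq' _ _ (Mop_ae g hg u) (EventuallyEq.rfl),
    inner_eq' _ _ (EventuallyEq.rfl) (Mop_ae g hg v)]
  refine integral_congr_ae (Eventually.of_forall fun t => by ring)

lemma Mop_inv (g g' : X → ℝ) (hg : MemLp g ∞ μ) (hg' : MemLp g' ∞ μ)
    (h : ∀ t, g' t * g t = 1) (u : Lp ℝ 2 μ) : Mop g' hg' (Mop g hg u) = u := by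
  refine Lp.ext ?_
  filter_upwards [Mop_ae g' hg' (Mop g hg u), Mop_ae g hg u] with t h1 h2
  rw [h1, h2, ← mul_assoc, h t, one_mul]


section Weight
variable {n : ℕ} {α : ℝ} {T : Set (Fin n → ℝ)} {μ : Measure (Fin n → ℝ)}

lemma weight_memℒp (hT : MeasurableSet T) (α : ℝ) : MemLp (weight α T) ∞ μ := by
  refine memLp_top_of_bound ((Measurable.ite hT measurable_const
    measurable_const).aestronglyMeasurable) (max |Real.sqrt α| 1)
    (Eventually.of_forall fun t => ?_)
  unfold weight
  split
  · exact le_max_of_le_left (by rw [Real.norm_eq_abs])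
  · simp

lemma weight_abs_le (hα : 0 ≤ α) (t : Fin n → ℝ) : |weight α T t| ≤ max (Real.sqrt α) 1 := by
  unfold weight
  split
  · rw [abs_of_nonneg (Real.sqrt_nonneg α)]; exact le_max_left _ _
  · simp

lemma weight_inv_mul (hα : 0 < α) (t : Fin n → ℝ) : weight α⁻¹ T t * weight α T t = 1 := by
  unfold weight
  split
  · rw [Real.sqrt_inv]
    exact inv_mul_cancel₀ (Real.sqrt_pos.mpr hα).ne'
  · simp

lemma weight_one : (weight 1 T) = fun _ => (1 : ℝ) := by
  funext t; unfold weight; split <;> simp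

lemma weight_sub_sq (α : ℝ) (T S : Set (Fin n → ℝ)) (t : Fin n → ℝ) :
    (weight α T t - weight α S t) ^ 2
      = ((T \ S) ∪ (S \ T)).indicator (fun _ => (Real.sqrt α - 1) ^ 2) t := by
  unfold weight
  by_cases h1 : t ∈ T <;> by_cases h2 : t ∈ S <;>
    simp [h1, h2, Set.indicator_apply, Set.mem_union, Set.mem_diff] <;> ring

lemma weight_sub_abs (α : ℝ) (T S : Set (Fin n → ℝ)) (t : Fin n → ℝ) :
    |weight α T t - weight α S t|
      = ((T \ S) ∪ (S \ T)).indicator (fun _ => |Real.sqrt α - 1|) t := by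
  unfold weight
  by_cases h1 : t ∈ T <;> by_cases h2 : t ∈ S <;>
    simp [h1, h2, Set.indicator_apply, Set.mem_union, Set.mem_diff, abs_sub_comm]

end Weight
section Jeq
variable {n : ℕ} {Ω : Set (Fin n → ℝ)}

lemma J_eq (hΩ : MeasurableSet Ω) {Y : Type*}
    [NormedAddCommGroup Y] [InnerProductSpace ℝ Y]
    (F : Lp ℝ 2 (volume.restrict Ω) → Y) (xstar : Lp ℝ 2 (volume.restrict Ω))
    {α : ℝ} (hα : 0 < α) {T : Set (Fin n → ℝ)} (hT : MeasurableSet T) (hTΩ : T ⊆ Ω)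
    (z : Y) (x : Lp ℝ 2 (volume.restrict Ω)) :
    J Ω F xstar α T z x
      = ‖F x - z‖ ^ 2 + ‖Mop (weight α T) (weight_memℒp hT α) (x - xstar)‖ ^ 2 := by
  unfold J sqInt
  congr 1
  have hInt : Integrable (fun t => (weight α T t * (x - xstar) t) ^ 2) (volume.restrict Ω) :=
    (integrable_sq (Mop (weight α T) (weight_memℒp hT α) (x - xstar))).congr
      (by filter_upwards [Mop_ae (weight α T) (weight_memℒp hT α) (x - xstar)] with t ht
          rw [ht])
  rw [Mop_norm_sq, ← integral_add_compl hT hInt]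
  congr 1
  · rw [show (∫ t in T, (weight α T t * (x - xstar) t) ^ 2 ∂(volume.restrict Ω))
        = ∫ t in T, α * ((x - xstar) t) ^ 2 ∂(volume.restrict Ω) from
      setIntegral_congr_fun hT fun t ht => by
        unfold weight; rw [if_pos ht, mul_pow, Real.sq_sqrt hα.le],
      integral_const_mul]
  · rw [show (∫ t in Tᶜ, (weight α T t * (x - xstar) t) ^ 2 ∂(volume.restrict Ω))
        = ∫ t in Tᶜ, ((x - xstar) t) ^ 2 ∂(volume.restrict Ω) from
      setIntegral_congr_fun hT.compl fun t ht => by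
        unfold weight; rw [if_neg ht, one_mul]]
    show ∫ t, ((x - xstar) t) ^ 2 ∂((volume.restrict Ω).restrict (Ω \ T))
        = ∫ t, ((x - xstar) t) ^ 2 ∂((volume.restrict Ω).restrict Tᶜ)
    rw [Measure.restrict_restrict (hΩ.diff hT), Measure.restrict_restrict hT.compl,
      show (Ω \ T) ∩ Ω = Tᶜ ∩ Ω from by ext t; simp [Set.mem_diff]; tauto]

end Jeq

lemma Mop_sub_ae₂ {X : Type*} [MeasurableSpace X] {μ : Measure X}
    (g₁ g₂ : X → ℝ) (hg₁ : MemLp g₁ ∞ μ) (hg₂ : MemLp g₂ ∞ μ) (u : Lp ℝ 2 μ) :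
    ⇑(Mop g₁ hg₁ u - Mop g₂ hg₂ u) =ᵐ[μ] fun t => (g₁ t - g₂ t) * u t := by
  filter_upwards [Lp.coeFn_sub (Mop g₁ hg₁ u) (Mop g₂ hg₂ u), Mop_ae g₁ hg₁ u,
    Mop_ae g₂ hg₂ u] with t h1 h2 h3
  rw [h1, Pi.sub_apply, h2, h3]; ring

section W6
variable {n : ℕ} {Ω : Set (Fin n → ℝ)}

lemma Mop_weight_diff_tendsto {S : Set (Fin n → ℝ)} (hS : MeasurableSet S)
    {Sk : ℕ → Set (Fin n → ℝ)} (hSk : ∀ k, MeasurableSet (Sk k))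
    {α : ℝ} (hα : 0 < α)
    (hweights : Tendsto
      (fun k => eLpNorm (weight α (Sk k) - weight α S) 2 (volume.restrict Ω))
      atTop (𝓝 0))
    (α' : ℝ) (hα' : 0 < α') (hcase : α = 1 → α' = 1)
    (z : Lp ℝ 2 (volume.restrict Ω)) :
    Tendsto (fun k => ‖Mop (weight α' (Sk k)) (weight_memℒp (hSk k) α') z
      - Mop (weight α' S) (weight_memℒp hS α') z‖) atTop (𝓝 0) := by
  by_cases hone : α' = 1
  · subst hone
    have hz : ∀ k, Mop (weight 1 (Sk k)) (weight_memℒp (hSk k) 1) z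
        = Mop (weight 1 S) (weight_memℒp hS 1) z := by
      intro k
      refine Lp.ext ?_
      filter_upwards [Mop_ae (weight 1 (Sk k)) (weight_memℒp (hSk k) 1) z,
        Mop_ae (weight 1 S) (weight_memℒp hS 1) z] with t h1 h2
      rw [h1, h2]
      simp [weight_one]
    simp only [hz, sub_self, norm_zero]
    exact tendsto_const_nhds
  · have hαne : α ≠ 1 := fun h => hone (hcase h)
    set A : ℕ → Set (Fin n → ℝ) := fun k => (Sk k \ S) ∪ (S \ Sk k) with hA
    have hAm : ∀ k, MeasurableSet (A k) :=
      fun k => ((hSk k).diff hS).union (hS.diff (hSk k))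
    -- the symmetric-difference measures tend to zero
    have hμ0 : Tendsto (fun k => (volume.restrict Ω) (A k)) atTop (𝓝 0) := by
      have hfe : ∀ k, eLpNorm (weight α (Sk k) - weight α S) 2 (volume.restrict Ω)
          = (‖|Real.sqrt α - 1|‖₊ : ℝ≥0∞) * (volume.restrict Ω) (A k) ^ ((1:ℝ)/2) := by
        intro k
        rw [← MeasureTheory.eLpNorm_norm]
        have : (fun t => ‖(weight α (Sk k) - weight α S) t‖)
            = (A k).indicator (fun _ => |Real.sqrt α - 1|) := by
          funext t
          rw [Pi.sub_apply, Real.norm_eq_abs, weight_sub_abs]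
        rw [this, MeasureTheory.eLpNorm_indicator_const (hAm k) two_ne_zero ENNReal.ofNat_ne_top]
        norm_num
        rfl
      have hc0 : (‖|Real.sqrt α - 1|‖₊ : ℝ≥0∞) ≠ 0 := by
        simp only [ne_eq, ENNReal.coe_eq_zero, nnnorm_eq_zero]
        intro h
        rw [abs_eq_zero, sub_eq_zero, Real.sqrt_eq_one] at h
        exact hαne h
      have hct : (‖|Real.sqrt α - 1|‖₊ : ℝ≥0∞) ≠ ⊤ := ENNReal.coe_ne_top
      have h2 : Tendsto (fun k => (volume.restrict Ω) (A k) ^ ((1:ℝ)/2)) atTop (𝓝 0) := by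
        have h3 := ENNReal.Tendsto.const_mul (a := (‖|Real.sqrt α - 1|‖₊ : ℝ≥0∞)⁻¹)
          (by simpa only [hfe] using hweights) (Or.inr (by simpa using hc0))
        rw [mul_zero] at h3
        refine h3.congr fun k => ?_
        rw [← mul_assoc, ENNReal.inv_mul_cancel hc0 hct, one_mul]
      have h4 : Tendsto (fun k => (volume.restrict Ω) (A k) ^ ((1:ℝ)/2) * (volume.restrict Ω) (A k) ^ ((1:ℝ)/2)) atTop (𝓝 0) := by
        simpa using ENNReal.Tendsto.mul h2 (Or.inr ENNReal.zero_ne_top) h2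
          (Or.inr ENNReal.zero_ne_top)
      refine h4.congr fun k => ?_
      rw [← sq, ← ENNReal.rpow_natCast, ← ENNReal.rpow_mul]
      norm_num
    -- absolute continuity of integrals of z²
    have hint : Tendsto (fun k => ∫ t in A k, (z t) ^ 2 ∂(volume.restrict Ω)) atTop (𝓝 0) :=
      (integrable_sq z).tendsto_setIntegral_nhds_zero hμ0
    -- rewrite the norms
    have hnormsq : ∀ k, ‖Mop (weight α' (Sk k)) (weight_memℒp (hSk k) α') z
        - Mop (weight α' S) (weight_memℒp hS α') z‖ ^ 2
        = (Real.sqrt α' - 1) ^ 2 * ∫ t in A k, (z t) ^ 2 ∂(volume.restrict Ω) := by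
      intro k
      rw [norm_sq_eq' _ (Mop_sub_ae₂ _ _ _ _ z)]
      have : (fun t => ((weight α' (Sk k) t - weight α' S t) * z t) ^ 2)
          = fun t => (A k).indicator (fun s => (Real.sqrt α' - 1) ^ 2 * (z s) ^ 2) t := by
        funext t
        rw [mul_pow, weight_sub_sq]
        by_cases ht : t ∈ A k
        · rw [Set.indicator_of_mem ht, Set.indicator_of_mem ht]
        · rw [Set.indicator_of_notMem ht, Set.indicator_of_notMem ht, zero_mul]
      rw [this, MeasureTheory.integral_indicator (hAm k), integral_const_mul]
    have hsq : Tendsto (fun k => ‖Mop (weight α' (Sk k)) (weight_memℒp (hSk k) α') z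
        - Mop (weight α' S) (weight_memℒp hS α') z‖ ^ 2) atTop (𝓝 0) := by
      simp only [hnormsq]
      simpa using hint.const_mul ((Real.sqrt α' - 1) ^ 2)
    have := (Real.continuous_sqrt.tendsto 0).comp hsq
    rw [Real.sqrt_zero] at this
    refine this.congr fun k => ?_
    simp only [Function.comp_apply]
    exact Real.sqrt_sq (norm_nonneg (Mop (weight α' (Sk k)) (weight_memℒp (hSk k) α') z
      - Mop (weight α' S) (weight_memℒp hS α') z))

end W6


lemma tendsto_zero_of_sq {f : ℕ → ℝ} (hf : ∀ k, 0 ≤ f k)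
    (h : Tendsto (fun k => f k ^ 2) atTop (𝓝 0)) : Tendsto f atTop (𝓝 0) := by
  have h2 := (Real.continuous_sqrt.tendsto 0).comp h
  rw [Real.sqrt_zero] at h2
  exact h2.congr fun k => by simp [Real.sqrt_sq (hf k)]

section Key
variable {n : ℕ} {Ω : Set (Fin n → ℝ)} {Y : Type*} [NormedAddCommGroup Y]
  [InnerProductSpace ℝ Y] [CompleteSpace Y]

lemma key (hΩmeas : MeasurableSet Ω)
    (D : Set (Lp ℝ 2 (volume.restrict Ω)))
    (F : Lp ℝ 2 (volume.restrict Ω) → Y)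
    (xstar : Lp ℝ 2 (volume.restrict Ω))
    {α : ℝ} (hα : 0 < α)
    {S : Set (Fin n → ℝ)} (hSmeas : MeasurableSet S) (hSΩ : S ⊆ Ω)
    {Sk : ℕ → Set (Fin n → ℝ)} (hSkmeas : ∀ k, MeasurableSet (Sk k))
    (hSkΩ : ∀ k, Sk k ⊆ Ω)
    (hweights : Tendsto
      (fun k => eLpNorm (weight α (Sk k) - weight α S) 2 (volume.restrict Ω))
      atTop (𝓝 0))
    (yδ : Y) (xs : ℕ → Lp ℝ 2 (volume.restrict Ω))
    (hxs : ∀ k, IsMinimizer (J Ω F xstar α (Sk k) yδ) D (xs k))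
    (xbar : Lp ℝ 2 (volume.restrict Ω)) (z : Y)
    (hxbarD : xbar ∈ D) (hFxbar : F xbar = z)
    (hwk : WeakConv xs xbar) (hzk : WeakConv (fun k => F (xs k)) z) :
    Tendsto xs atTop (𝓝 xbar) ∧ IsMinimizer (J Ω F xstar α S yδ) D xbar := by
  have hαinv : (0:ℝ) < α⁻¹ := by positivity
  have hcase : α = 1 → α⁻¹ = 1 := fun h => by rw [h]; norm_num
  have hβ0 : (0:ℝ) ≤ max (Real.sqrt α) 1 := le_trans zero_le_one (le_max_right _ _)
  have hβ0' : (0:ℝ) ≤ max (Real.sqrt α⁻¹) 1 := le_trans zero_le_one (le_max_right _ _)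
  have hW6 : ∀ u : Lp ℝ 2 (volume.restrict Ω),
      Tendsto (fun k => ‖Mop (weight α (Sk k)) (weight_memℒp (hSkmeas k) α) (u) - Mop (weight α S) (weight_memℒp hSmeas α) (u)‖) atTop (𝓝 0) :=
    fun u => Mop_weight_diff_tendsto hSmeas hSkmeas hα hweights α hα (fun h => h) u
  have hW6' : ∀ u : Lp ℝ 2 (volume.restrict Ω),
      Tendsto (fun k => ‖Mop (weight α⁻¹ (Sk k)) (weight_memℒp (hSkmeas k) α⁻¹) (u) - Mop (weight α⁻¹ S) (weight_memℒp hSmeas α⁻¹) (u)‖) atTop (𝓝 0) :=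
    fun u => Mop_weight_diff_tendsto hSmeas hSkmeas hα hweights α⁻¹ hαinv hcase u
  have hJk : ∀ k x, J Ω F xstar α (Sk k) yδ x
      = ‖F x - yδ‖ ^ 2 + ‖Mop (weight α (Sk k)) (weight_memℒp (hSkmeas k) α) (x - xstar)‖ ^ 2 :=
    fun k x => J_eq hΩmeas F xstar hα (hSkmeas k) (hSkΩ k) yδ x
  have hJS : ∀ x, J Ω F xstar α S yδ x
      = ‖F x - yδ‖ ^ 2 + ‖Mop (weight α S) (weight_memℒp hSmeas α) (x - xstar)‖ ^ 2 :=
    fun x => J_eq hΩmeas F xstar hα hSmeas hSΩ yδ x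
  -- minimality against xbar
  have hmin : ∀ k, ‖F (xs k) - yδ‖ ^ 2 + ‖Mop (weight α (Sk k)) (weight_memℒp (hSkmeas k) α) (xs k - xstar)‖ ^ 2
      ≤ J Ω F xstar α (Sk k) yδ xbar := by
    intro k
    have h := (hxs k).2 xbar hxbarD
    rwa [hJk k (xs k)] at h
  -- uniform bound
  have hC0 : ∀ k, J Ω F xstar α (Sk k) yδ xbar
      ≤ ‖F xbar - yδ‖ ^ 2 + (max (Real.sqrt α) 1 * ‖xbar - xstar‖) ^ 2 := by
    intro k
    rw [hJk k xbar]
    have h1 := Mop_norm_le (weight α (Sk k)) (weight_memℒp (hSkmeas k) α) (xbar - xstar)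
      hβ0 (fun t => weight_abs_le hα.le t)
    have h2 := pow_le_pow_left₀ (norm_nonneg _) h1 2
    linarith
  have hwbound : ∀ k, ‖xs k - xstar‖ ≤ max (Real.sqrt α⁻¹) 1
      * Real.sqrt (‖F xbar - yδ‖ ^ 2 + (max (Real.sqrt α) 1 * ‖xbar - xstar‖) ^ 2) := by
    intro k
    have h1 : ‖Mop (weight α (Sk k)) (weight_memℒp (hSkmeas k) α) (xs k - xstar)‖ ^ 2
        ≤ ‖F xbar - yδ‖ ^ 2 + (max (Real.sqrt α) 1 * ‖xbar - xstar‖) ^ 2 := by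
      have h := (hmin k).trans (hC0 k)
      have h0 : (0:ℝ) ≤ ‖F (xs k) - yδ‖ ^ 2 := sq_nonneg _
      linarith
    have h2 : ‖Mop (weight α (Sk k)) (weight_memℒp (hSkmeas k) α) (xs k - xstar)‖
        ≤ Real.sqrt (‖F xbar - yδ‖ ^ 2 + (max (Real.sqrt α) 1 * ‖xbar - xstar‖) ^ 2) := by
      have := Real.sqrt_le_sqrt h1
      rwa [Real.sqrt_sq (norm_nonneg _)] at this
    have h3 : Mop (weight α⁻¹ (Sk k)) (weight_memℒp (hSkmeas k) α⁻¹) (Mop (weight α (Sk k)) (weight_memℒp (hSkmeas k) α) (xs k - xstar)) = xs k - xstar :=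
      Mop_inv _ _ _ _ (weight_inv_mul hα) _
    calc ‖xs k - xstar‖ = ‖Mop (weight α⁻¹ (Sk k)) (weight_memℒp (hSkmeas k) α⁻¹) (Mop (weight α (Sk k)) (weight_memℒp (hSkmeas k) α) (xs k - xstar))‖ := by rw [h3]
    _ ≤ max (Real.sqrt α⁻¹) 1 * ‖Mop (weight α (Sk k)) (weight_memℒp (hSkmeas k) α) (xs k - xstar)‖ :=
        Mop_norm_le _ _ _ hβ0' (fun t => weight_abs_le hαinv.le t)
    _ ≤ _ := mul_le_mul_of_nonneg_left h2 hβ0'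
  -- convergence of J_k (xbar)
  have hMg : Tendsto (fun k => Mop (weight α (Sk k)) (weight_memℒp (hSkmeas k) α) (xbar - xstar)) atTop (𝓝 (Mop (weight α S) (weight_memℒp hSmeas α) (xbar - xstar))) :=
    tendsto_iff_norm_sub_tendsto_zero.mpr (hW6 (xbar - xstar))
  have hck : Tendsto (fun k => J Ω F xstar α (Sk k) yδ xbar) atTop
      (𝓝 (‖F xbar - yδ‖ ^ 2 + ‖Mop (weight α S) (weight_memℒp hSmeas α) (xbar - xstar)‖ ^ 2)) := by
    simp only [hJk]
    exact tendsto_const_nhds.add (((continuous_norm.tendsto _).comp hMg).pow 2)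
  -- inner-product convergences
  have hv : Tendsto (fun k => ⟪F (xs k) - yδ, F xbar - yδ⟫) atTop
      (𝓝 (‖F xbar - yδ‖ ^ 2)) := by
    have h1 := (weakConv_sub_const hzk yδ) (F xbar - yδ)
    have h2 : z - yδ = F xbar - yδ := by rw [hFxbar]
    rw [h2, real_inner_self_eq_norm_sq] at h1
    exact h1
  have hwkweak : WeakConv (fun k => xs k - xstar) (xbar - xstar) := weakConv_sub_const hwk xstar
  have hp : Tendsto (fun k => ⟪Mop (weight α (Sk k)) (weight_memℒp (hSkmeas k) α) (xs k - xstar), Mop (weight α S) (weight_memℒp hSmeas α) (xbar - xstar)⟫) atTop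
      (𝓝 (‖Mop (weight α S) (weight_memℒp hSmeas α) (xbar - xstar)‖ ^ 2)) := by
    have hsplit : ∀ k, ⟪Mop (weight α (Sk k)) (weight_memℒp (hSkmeas k) α) (xs k - xstar), Mop (weight α S) (weight_memℒp hSmeas α) (xbar - xstar)⟫
        = ⟪xs k - xstar, Mop (weight α S) (weight_memℒp hSmeas α) (Mop (weight α S) (weight_memℒp hSmeas α) (xbar - xstar))⟫
          + ⟪xs k - xstar, Mop (weight α (Sk k)) (weight_memℒp (hSkmeas k) α) (Mop (weight α S) (weight_memℒp hSmeas α) (xbar - xstar)) - Mop (weight α S) (weight_memℒp hSmeas α) (Mop (weight α S) (weight_memℒp hSmeas α) (xbar - xstar))⟫ := by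
      intro k
      rw [Mop_selfadj, inner_sub_right]
      ring
    have hterm1 : Tendsto (fun k => ⟪xs k - xstar, Mop (weight α S) (weight_memℒp hSmeas α) (Mop (weight α S) (weight_memℒp hSmeas α) (xbar - xstar))⟫) atTop
        (𝓝 (‖Mop (weight α S) (weight_memℒp hSmeas α) (xbar - xstar)‖ ^ 2)) := by
      have h1 := hwkweak (Mop (weight α S) (weight_memℒp hSmeas α) (Mop (weight α S) (weight_memℒp hSmeas α) (xbar - xstar)))
      have h2 : ⟪xbar - xstar, Mop (weight α S) (weight_memℒp hSmeas α) (Mop (weight α S) (weight_memℒp hSmeas α) (xbar - xstar))⟫ = ‖Mop (weight α S) (weight_memℒp hSmeas α) (xbar - xstar)‖ ^ 2 := by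
        rw [← Mop_selfadj, real_inner_self_eq_norm_sq]
      rwa [h2] at h1
    have hterm2 : Tendsto (fun k => ⟪xs k - xstar, Mop (weight α (Sk k)) (weight_memℒp (hSkmeas k) α) (Mop (weight α S) (weight_memℒp hSmeas α) (xbar - xstar)) - Mop (weight α S) (weight_memℒp hSmeas α) (Mop (weight α S) (weight_memℒp hSmeas α) (xbar - xstar))⟫) atTop (𝓝 0) := by
      have hb : ∀ k, ‖⟪xs k - xstar, Mop (weight α (Sk k)) (weight_memℒp (hSkmeas k) α) (Mop (weight α S) (weight_memℒp hSmeas α) (xbar - xstar)) - Mop (weight α S) (weight_memℒp hSmeas α) (Mop (weight α S) (weight_memℒp hSmeas α) (xbar - xstar))⟫‖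
          ≤ (max (Real.sqrt α⁻¹) 1
            * Real.sqrt (‖F xbar - yδ‖ ^ 2 + (max (Real.sqrt α) 1 * ‖xbar - xstar‖) ^ 2))
            * ‖Mop (weight α (Sk k)) (weight_memℒp (hSkmeas k) α) (Mop (weight α S) (weight_memℒp hSmeas α) (xbar - xstar)) - Mop (weight α S) (weight_memℒp hSmeas α) (Mop (weight α S) (weight_memℒp hSmeas α) (xbar - xstar))‖ := by
        intro k
        rw [Real.norm_eq_abs]
        refine (abs_real_inner_le_norm _ _).trans ?_
        exact mul_le_mul_of_nonneg_right (hwbound k) (norm_nonneg _)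
      refine squeeze_zero_norm hb ?_
      simpa using (hW6 (Mop (weight α S) (weight_memℒp hSmeas α) (xbar - xstar))).const_mul (max (Real.sqrt α⁻¹) 1
          * Real.sqrt (‖F xbar - yδ‖ ^ 2 + (max (Real.sqrt α) 1 * ‖xbar - xstar‖) ^ 2))
    have := hterm1.add hterm2
    rw [add_zero] at this
    exact this.congr fun k => (hsplit k).symm
  -- the squeeze
  have hsum : Tendsto (fun k => J Ω F xstar α (Sk k) yδ xbar
      - 2 * ⟪F (xs k) - yδ, F xbar - yδ⟫ - 2 * ⟪Mop (weight α (Sk k)) (weight_memℒp (hSkmeas k) α) (xs k - xstar), Mop (weight α S) (weight_memℒp hSmeas α) (xbar - xstar)⟫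
      + (‖F xbar - yδ‖ ^ 2 + ‖Mop (weight α S) (weight_memℒp hSmeas α) (xbar - xstar)‖ ^ 2)) atTop (𝓝 0) := by
    have h1 := ((hck.sub (hv.const_mul 2)).sub (hp.const_mul 2)).add
      (tendsto_const_nhds (x := ‖F xbar - yδ‖ ^ 2 + ‖Mop (weight α S) (weight_memℒp hSmeas α) (xbar - xstar)‖ ^ 2))
    have h0 : ‖F xbar - yδ‖ ^ 2 + ‖Mop (weight α S) (weight_memℒp hSmeas α) (xbar - xstar)‖ ^ 2
        - 2 * ‖F xbar - yδ‖ ^ 2 - 2 * ‖Mop (weight α S) (weight_memℒp hSmeas α) (xbar - xstar)‖ ^ 2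
        + (‖F xbar - yδ‖ ^ 2 + ‖Mop (weight α S) (weight_memℒp hSmeas α) (xbar - xstar)‖ ^ 2) = 0 := by ring
    rw [h0] at h1
    exact h1
  have hs0 : Tendsto (fun k => ‖(F (xs k) - yδ) - (F xbar - yδ)‖ ^ 2
      + ‖Mop (weight α (Sk k)) (weight_memℒp (hSkmeas k) α) (xs k - xstar) - Mop (weight α S) (weight_memℒp hSmeas α) (xbar - xstar)‖ ^ 2) atTop (𝓝 0) := by
    refine squeeze_zero (fun k => by positivity) (fun k => ?_) hsum
    have h1 := @norm_sub_sq_real Y _ _ (F (xs k) - yδ) (F xbar - yδ)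
    have h2 := @norm_sub_sq_real (Lp ℝ 2 (volume.restrict Ω)) _ _
      (Mop (weight α (Sk k)) (weight_memℒp (hSkmeas k) α) (xs k - xstar)) (Mop (weight α S) (weight_memℒp hSmeas α) (xbar - xstar))
    have h3 := hmin k
    linarith
  have hpdiff : Tendsto (fun k => ‖Mop (weight α (Sk k)) (weight_memℒp (hSkmeas k) α) (xs k - xstar) - Mop (weight α S) (weight_memℒp hSmeas α) (xbar - xstar)‖) atTop (𝓝 0) := by
    refine tendsto_zero_of_sq (fun k => norm_nonneg _) ?_
    exact squeeze_zero (fun k => sq_nonneg _) (fun k => le_add_of_nonneg_left (sq_nonneg _)) hs0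
  have hvdiff : Tendsto (fun k => ‖(F (xs k) - yδ) - (F xbar - yδ)‖) atTop (𝓝 0) := by
    refine tendsto_zero_of_sq (fun k => norm_nonneg _) ?_
    exact squeeze_zero (fun k => sq_nonneg _) (fun k => le_add_of_nonneg_right (sq_nonneg _)) hs0
  have hpk : Tendsto (fun k => Mop (weight α (Sk k)) (weight_memℒp (hSkmeas k) α) (xs k - xstar)) atTop (𝓝 (Mop (weight α S) (weight_memℒp hSmeas α) (xbar - xstar))) :=
    tendsto_iff_norm_sub_tendsto_zero.mpr hpdiff
  have hvk : Tendsto (fun k => F (xs k) - yδ) atTop (𝓝 (F xbar - yδ)) :=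
    tendsto_iff_norm_sub_tendsto_zero.mpr hvdiff
  -- strong convergence
  have hstrong : Tendsto xs atTop (𝓝 xbar) := by
    rw [tendsto_iff_norm_sub_tendsto_zero]
    have hb : ∀ k, ‖xs k - xbar‖ ≤ max (Real.sqrt α⁻¹) 1 * ‖Mop (weight α (Sk k)) (weight_memℒp (hSkmeas k) α) (xs k - xstar) - Mop (weight α S) (weight_memℒp hSmeas α) (xbar - xstar)‖
        + ‖Mop (weight α⁻¹ (Sk k)) (weight_memℒp (hSkmeas k) α⁻¹) (Mop (weight α S) (weight_memℒp hSmeas α) (xbar - xstar)) - Mop (weight α⁻¹ S) (weight_memℒp hSmeas α⁻¹) (Mop (weight α S) (weight_memℒp hSmeas α) (xbar - xstar))‖ := by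
      intro k
      have h3 : Mop (weight α⁻¹ (Sk k)) (weight_memℒp (hSkmeas k) α⁻¹) (Mop (weight α (Sk k)) (weight_memℒp (hSkmeas k) α) (xs k - xstar)) = xs k - xstar :=
        Mop_inv _ _ _ _ (weight_inv_mul hα) _
      have h4 : Mop (weight α⁻¹ S) (weight_memℒp hSmeas α⁻¹) (Mop (weight α S) (weight_memℒp hSmeas α) (xbar - xstar)) = xbar - xstar := Mop_inv _ _ _ _ (weight_inv_mul hα) _
      have h5 : xs k - xbar = (xs k - xstar) - (xbar - xstar) :=
        (sub_sub_sub_cancel_right _ _ _).symm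
      have h6 : ‖xs k - xbar‖ = ‖Mop (weight α⁻¹ (Sk k)) (weight_memℒp (hSkmeas k) α⁻¹) (Mop (weight α (Sk k)) (weight_memℒp (hSkmeas k) α) (xs k - xstar)) - Mop (weight α⁻¹ S) (weight_memℒp hSmeas α⁻¹) (Mop (weight α S) (weight_memℒp hSmeas α) (xbar - xstar))‖ := by
        rw [h3, h4, h5]
      rw [h6]
      have h7 : ‖Mop (weight α⁻¹ (Sk k)) (weight_memℒp (hSkmeas k) α⁻¹) (Mop (weight α (Sk k)) (weight_memℒp (hSkmeas k) α) (xs k - xstar)) - Mop (weight α⁻¹ S) (weight_memℒp hSmeas α⁻¹) (Mop (weight α S) (weight_memℒp hSmeas α) (xbar - xstar))‖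
          ≤ ‖Mop (weight α⁻¹ (Sk k)) (weight_memℒp (hSkmeas k) α⁻¹) (Mop (weight α (Sk k)) (weight_memℒp (hSkmeas k) α) (xs k - xstar)) - Mop (weight α⁻¹ (Sk k)) (weight_memℒp (hSkmeas k) α⁻¹) (Mop (weight α S) (weight_memℒp hSmeas α) (xbar - xstar))‖
            + ‖Mop (weight α⁻¹ (Sk k)) (weight_memℒp (hSkmeas k) α⁻¹) (Mop (weight α S) (weight_memℒp hSmeas α) (xbar - xstar)) - Mop (weight α⁻¹ S) (weight_memℒp hSmeas α⁻¹) (Mop (weight α S) (weight_memℒp hSmeas α) (xbar - xstar))‖ := by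
        have := norm_add_le (Mop (weight α⁻¹ (Sk k)) (weight_memℒp (hSkmeas k) α⁻¹) (Mop (weight α (Sk k)) (weight_memℒp (hSkmeas k) α) (xs k - xstar)) - Mop (weight α⁻¹ (Sk k)) (weight_memℒp (hSkmeas k) α⁻¹) (Mop (weight α S) (weight_memℒp hSmeas α) (xbar - xstar)))
          (Mop (weight α⁻¹ (Sk k)) (weight_memℒp (hSkmeas k) α⁻¹) (Mop (weight α S) (weight_memℒp hSmeas α) (xbar - xstar)) - Mop (weight α⁻¹ S) (weight_memℒp hSmeas α⁻¹) (Mop (weight α S) (weight_memℒp hSmeas α) (xbar - xstar)))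
        rwa [sub_add_sub_cancel] at this
      refine h7.trans (add_le_add_left ?_ _)
      exact Mop_norm_sub_le _ _ _ _ hβ0' (fun t => weight_abs_le hαinv.le t)
    refine squeeze_zero (fun k => norm_nonneg _) hb ?_
    have h8 := (hpdiff.const_mul (max (Real.sqrt α⁻¹) 1)).add (hW6' (Mop (weight α S) (weight_memℒp hSmeas α) (xbar - xstar)))
    simpa using h8
  refine ⟨hstrong, hxbarD, fun x' hx' => ?_⟩
  have hJxs : Tendsto (fun k => J Ω F xstar α (Sk k) yδ (xs k)) atTop
      (𝓝 (J Ω F xstar α S yδ xbar)) := by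
    rw [hJS xbar]
    simp only [hJk]
    exact (((continuous_norm.tendsto _).comp hvk).pow 2).add
      (((continuous_norm.tendsto _).comp hpk).pow 2)
  have hJx' : Tendsto (fun k => J Ω F xstar α (Sk k) yδ x') atTop
      (𝓝 (J Ω F xstar α S yδ x')) := by
    rw [hJS x']
    simp only [hJk]
    refine tendsto_const_nhds.add ?_
    exact ((continuous_norm.tendsto _).comp
      (tendsto_iff_norm_sub_tendsto_zero.mpr (hW6 (x' - xstar)))).pow 2
  exact le_of_tendsto_of_tendsto' hJxs hJx' (fun k => (hxs k).2 x' hx')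

end Key

end RegStab

open RegStab

/-- **Regularization stability** (Theorem A.2): if the weight functions
`f_{S_k,α}` converge to `f_{S,α}` in `L²(Ω)` and `x_k` minimizes
`J_{α,S_k,y^δ}` over `D(F)`, then `(x_k)` has a strongly convergent subsequence
in `L²(Ω)`, and every strong limit of a convergent subsequence of `(x_k)` is a
minimizer of `J_{α,S,y^δ}` over `D(F)`. -/
theorem regularization_stability
    {n : ℕ} (Ω : Set (Fin n → ℝ)) (hΩmeas : MeasurableSet Ω)
    (hΩbdd : Bornology.IsBounded Ω)
    {Y : Type*} [NormedAddCommGroup Y] [InnerProductSpace ℝ Y] [CompleteSpace Y]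
    (D : Set (Lp ℝ 2 (volume.restrict Ω))) (hD : D.Nonempty)
    (F : Lp ℝ 2 (volume.restrict Ω) → Y)
    (hFcont : ContinuousOn F D)
    (hFweak : ∀ (u : ℕ → Lp ℝ 2 (volume.restrict Ω))
      (x : Lp ℝ 2 (volume.restrict Ω)) (z : Y),
      (∀ k, u k ∈ D) → WeakConv u x → WeakConv (fun k => F (u k)) z →
        x ∈ D ∧ F x = z)
    (xstar : Lp ℝ 2 (volume.restrict Ω))
    (α : ℝ) (hα : 0 < α)
    (S : Set (Fin n → ℝ)) (hSmeas : MeasurableSet S) (hSΩ : S ⊆ Ω)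
    (Sk : ℕ → Set (Fin n → ℝ)) (hSkmeas : ∀ k, MeasurableSet (Sk k))
    (hSkΩ : ∀ k, Sk k ⊆ Ω)
    (hweights : Tendsto
      (fun k => eLpNorm (weight α (Sk k) - weight α S) 2 (volume.restrict Ω))
      atTop (𝓝 0))
    (yδ : Y)
    (xs : ℕ → Lp ℝ 2 (volume.restrict Ω))
    (hxs : ∀ k, IsMinimizer (J Ω F xstar α (Sk k) yδ) D (xs k)) :
    (∃ φ : ℕ → ℕ, StrictMono φ ∧
      ∃ xbar : Lp ℝ 2 (volume.restrict Ω), Tendsto (xs ∘ φ) atTop (𝓝 xbar)) ∧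
    (∀ (φ : ℕ → ℕ), StrictMono φ →
      ∀ xbar : Lp ℝ 2 (volume.restrict Ω), Tendsto (xs ∘ φ) atTop (𝓝 xbar) →
        IsMinimizer (J Ω F xstar α S yδ) D xbar) := by

  obtain ⟨x0, hx0⟩ := hD
  have hαinv : (0:ℝ) < α⁻¹ := by positivity
  have hβ0 : (0:ℝ) ≤ max (Real.sqrt α) 1 := le_trans zero_le_one (le_max_right _ _)
  have hβ0' : (0:ℝ) ≤ max (Real.sqrt α⁻¹) 1 := le_trans zero_le_one (le_max_right _ _)
  have hJk : ∀ k x, J Ω F xstar α (Sk k) yδ x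
      = ‖F x - yδ‖ ^ 2 + ‖Mop (weight α (Sk k)) (weight_memℒp (hSkmeas k) α) (x - xstar)‖ ^ 2 :=
    fun k x => J_eq hΩmeas F xstar hα (hSkmeas k) (hSkΩ k) yδ x
  have hbound1 : ∀ k, ‖Mop (weight α (Sk k)) (weight_memℒp (hSkmeas k) α) (xs k - xstar)‖ ^ 2
        ≤ ‖F x0 - yδ‖ ^ 2 + (max (Real.sqrt α) 1 * ‖x0 - xstar‖) ^ 2
      ∧ ‖F (xs k) - yδ‖ ^ 2
        ≤ ‖F x0 - yδ‖ ^ 2 + (max (Real.sqrt α) 1 * ‖x0 - xstar‖) ^ 2 := by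
    intro k
    have h := (hxs k).2 x0 hx0
    rw [hJk k (xs k), hJk k x0] at h
    have h1 := Mop_norm_le (weight α (Sk k)) (weight_memℒp (hSkmeas k) α) (x0 - xstar)
      hβ0 (fun t => weight_abs_le hα.le t)
    have h2 := pow_le_pow_left₀ (norm_nonneg _) h1 2
    constructor
    · have := sq_nonneg ‖F (xs k) - yδ‖
      linarith
    · have := sq_nonneg ‖Mop (weight α (Sk k)) (weight_memℒp (hSkmeas k) α) (xs k - xstar)‖
      linarith
  have hxbound : ∀ k, ‖xs k‖ ≤ ‖xstar‖ + max (Real.sqrt α⁻¹) 1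
      * Real.sqrt (‖F x0 - yδ‖ ^ 2 + (max (Real.sqrt α) 1 * ‖x0 - xstar‖) ^ 2) := by
    intro k
    have h2 : ‖Mop (weight α (Sk k)) (weight_memℒp (hSkmeas k) α) (xs k - xstar)‖
        ≤ Real.sqrt (‖F x0 - yδ‖ ^ 2 + (max (Real.sqrt α) 1 * ‖x0 - xstar‖) ^ 2) := by
      have := Real.sqrt_le_sqrt (hbound1 k).1
      rwa [Real.sqrt_sq (norm_nonneg _)] at this
    have h3 : Mop (weight α⁻¹ (Sk k)) (weight_memℒp (hSkmeas k) α⁻¹) (Mop (weight α (Sk k)) (weight_memℒp (hSkmeas k) α) (xs k - xstar)) = xs k - xstar :=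
      Mop_inv _ _ _ _ (weight_inv_mul hα) _
    have h4 : ‖xs k - xstar‖ ≤ max (Real.sqrt α⁻¹) 1
        * Real.sqrt (‖F x0 - yδ‖ ^ 2 + (max (Real.sqrt α) 1 * ‖x0 - xstar‖) ^ 2) := by
      calc ‖xs k - xstar‖ = ‖Mop (weight α⁻¹ (Sk k)) (weight_memℒp (hSkmeas k) α⁻¹) (Mop (weight α (Sk k)) (weight_memℒp (hSkmeas k) α) (xs k - xstar))‖ := by rw [h3]
      _ ≤ max (Real.sqrt α⁻¹) 1 * ‖Mop (weight α (Sk k)) (weight_memℒp (hSkmeas k) α) (xs k - xstar)‖ :=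
          Mop_norm_le _ _ _ hβ0' (fun t => weight_abs_le hαinv.le t)
      _ ≤ _ := mul_le_mul_of_nonneg_left h2 hβ0'
    calc ‖xs k‖ = ‖xstar + (xs k - xstar)‖ := by congr 1; abel
    _ ≤ ‖xstar‖ + ‖xs k - xstar‖ := norm_add_le _ _
    _ ≤ _ := add_le_add_right h4 _
  have hFbound : ∀ k, ‖F (xs k)‖ ≤ ‖yδ‖
      + Real.sqrt (‖F x0 - yδ‖ ^ 2 + (max (Real.sqrt α) 1 * ‖x0 - xstar‖) ^ 2) := by
    intro k
    have h2 : ‖F (xs k) - yδ‖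
        ≤ Real.sqrt (‖F x0 - yδ‖ ^ 2 + (max (Real.sqrt α) 1 * ‖x0 - xstar‖) ^ 2) := by
      have := Real.sqrt_le_sqrt (hbound1 k).2
      rwa [Real.sqrt_sq (norm_nonneg _)] at this
    calc ‖F (xs k)‖ = ‖yδ + (F (xs k) - yδ)‖ := by congr 1; abel
    _ ≤ ‖yδ‖ + ‖F (xs k) - yδ‖ := norm_add_le _ _
    _ ≤ _ := add_le_add_right h2 _
  constructor
  · -- existence of a strongly convergent subsequence
    obtain ⟨φ₁, hφ₁, xbar1, hwk1⟩ := weak_bw xs _ hxbound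
    obtain ⟨φ₂, hφ₂, z1, hzk1⟩ := weak_bw (fun k => F (xs (φ₁ k))) _ (fun k => hFbound (φ₁ k))
    have hwk : WeakConv (fun k => xs (φ₁ (φ₂ k))) xbar1 := weakConv_comp hwk1 hφ₂
    have hzk : WeakConv (fun k => F (xs (φ₁ (φ₂ k)))) z1 := hzk1
    have hFW := hFweak (fun k => xs (φ₁ (φ₂ k))) xbar1 z1 (fun k => (hxs _).1) hwk hzk
    have hkey := key hΩmeas D F xstar hα hSmeas hSΩ (Sk := fun k => Sk (φ₁ (φ₂ k)))
      (fun k => hSkmeas _) (fun k => hSkΩ _)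
      (hweights.comp (hφ₁.comp hφ₂).tendsto_atTop) yδ (fun k => xs (φ₁ (φ₂ k)))
      (fun k => hxs _) xbar1 z1 hFW.1 hFW.2 hwk hzk
    exact ⟨φ₁ ∘ φ₂, hφ₁.comp hφ₂, xbar1, hkey.1⟩
  · -- every strong limit of a convergent subsequence is a minimizer
    intro ψ hψ xbar' hst
    obtain ⟨φ₂, hφ₂, z', hz'⟩ := weak_bw (fun k => F (xs (ψ k))) _ (fun k => hFbound (ψ k))
    have hst2 : Tendsto (fun k => xs (ψ (φ₂ k))) atTop (𝓝 xbar') := hst.comp hφ₂.tendsto_atTop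
    have hwk2 : WeakConv (fun k => xs (ψ (φ₂ k))) xbar' := weakConv_of_tendsto hst2
    have hzk2 : WeakConv (fun k => F (xs (ψ (φ₂ k)))) z' := hz'
    have hFW2 := hFweak (fun k => xs (ψ (φ₂ k))) xbar' z' (fun k => (hxs _).1) hwk2 hzk2
    have hkey := key hΩmeas D F xstar hα hSmeas hSΩ (Sk := fun k => Sk (ψ (φ₂ k)))
      (fun k => hSkmeas _) (fun k => hSkΩ _)
      (hweights.comp (hψ.comp hφ₂).tendsto_atTop) yδ (fun k => xs (ψ (φ₂ k)))
      (fun k => hxs _) xbar' z' hFW2.1 hFW2.2 hwk2 hzk2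
    exact hkey.2
end
end

section
/- (Convergence.) Let ‖y − y^{δ}‖_Y ≤ δ for noisy data y^{δ} ∈ Y, and let α : (0,∞) → (0,∞) satisfy α(δ) → 0 and δ²/α(δ) → 0 as δ → 0. Assume an x*-S-minimum-norm solution exists. Let δ_k → 0, let y_k ∈ Y with ‖y − y_k‖_Y ≤ δ_k, set α_k := α(δ_k), and let x_k ∈ D(F) be a minimizer of J_{α_k,S,y_k} over D(F). Then (x_k) has a subsequence converging strongly in L²(Ω), and every strong limit of a convergent subsequence of (x_k) is an x*-S-minimum-norm solution. -/
open MeasureTheory Filter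
open scoped RealInnerProductSpace ENNReal Topology

noncomputable section

/-- `x = 0` almost everywhere on `Ω ∖ S`. -/
def ZeroOff {n : ℕ} (Ω S : Set (Fin n → ℝ))
    (x : Lp ℝ 2 (volume.restrict Ω)) : Prop :=
  ∀ᵐ t ∂((volume.restrict Ω).restrict (Ω \ S)), x t = 0

/-- `xdag` is an `x*`-`S`-minimum-norm solution of `F(x) = y`: it belongs to
`D(F)`, solves `F(xdag) = y`, vanishes a.e. on `Ω ∖ S`, and minimizes
`‖x − x*‖_{L²}` among all such solutions. -/
def IsMNS {n : ℕ} (Ω : Set (Fin n → ℝ)) {Y : Type*} [NormedAddCommGroup Y]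
    [InnerProductSpace ℝ Y]
    (D : Set (Lp ℝ 2 (volume.restrict Ω))) (F : Lp ℝ 2 (volume.restrict Ω) → Y)
    (xstar : Lp ℝ 2 (volume.restrict Ω)) (S : Set (Fin n → ℝ)) (y : Y)
    (xdag : Lp ℝ 2 (volume.restrict Ω)) : Prop :=
  xdag ∈ D ∧ F xdag = y ∧ ZeroOff Ω S xdag ∧
    ∀ x ∈ D, F x = y → ZeroOff Ω S x → ‖xdag - xstar‖ ≤ ‖x - xstar‖

section helpers

variable {X : Type*} [MeasurableSpace X] {μ : Measure X}

theorem sq_integrable' (v : Lp ℝ 2 μ) : Integrable (fun t => (v t) ^ 2) μ :=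
  (Lp.memLp v).integrable_sq

theorem inner_L2' (v w : Lp ℝ 2 μ) : ⟪v, w⟫ = ∫ t, v t * w t ∂μ := by
  rw [L2.inner_def]; simp [RCLike.inner_apply, mul_comm]

theorem norm_sq_L2' (v : Lp ℝ 2 μ) : ‖v‖ ^ 2 = ∫ t, (v t) ^ 2 ∂μ := by
  rw [← real_inner_self_eq_norm_sq, inner_L2']
  congr 1; funext t; ring

def indLp (T : Set X) (hT : MeasurableSet T) (v : Lp ℝ 2 μ) : Lp ℝ 2 μ :=
  MemLp.toLp (T.indicator v) ((Lp.memLp v).indicator hT)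

theorem indLp_coeFn (T : Set X) (hT : MeasurableSet T) (v : Lp ℝ 2 μ) :
    (indLp T hT v : X → ℝ) =ᵐ[μ] T.indicator v :=
  MemLp.coeFn_toLp _

theorem inner_indLp (T : Set X) (hT : MeasurableSet T) (v w : Lp ℝ 2 μ) :
    ⟪w, indLp T hT v⟫ = ∫ t in T, w t * v t ∂μ := by
  rw [inner_L2', ← integral_indicator hT]
  apply integral_congr_ae
  filter_upwards [indLp_coeFn T hT v] with t ht
  rw [ht]
  by_cases h : t ∈ T <;> simp [Set.indicator_apply, h]

theorem norm_sq_indLp (T : Set X) (hT : MeasurableSet T) (v : Lp ℝ 2 μ) :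
    ‖indLp T hT v‖ ^ 2 = ∫ t in T, (v t) ^ 2 ∂μ := by
  rw [norm_sq_L2', ← integral_indicator hT]
  apply integral_congr_ae
  filter_upwards [indLp_coeFn T hT v] with t ht
  rw [ht]
  by_cases h : t ∈ T <;> simp [Set.indicator_apply, h]

theorem sqIntT_nonneg (T : Set X) (v : Lp ℝ 2 μ) :
    0 ≤ ∫ t in T, (v t) ^ 2 ∂μ :=
  integral_nonneg fun t => sq_nonneg _

theorem sqIntT_eq_zero_iff (T : Set X) (v : Lp ℝ 2 μ) :
    ∫ t in T, (v t) ^ 2 ∂μ = 0 ↔ ∀ᵐ t ∂μ.restrict T, v t = 0 := by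
  rw [integral_eq_zero_iff_of_nonneg (fun t => sq_nonneg _)
    ((sq_integrable' v).restrict)]
  constructor
  · intro h
    filter_upwards [h] with t ht
    exact pow_eq_zero_iff two_ne_zero |>.mp ht
  · intro h
    filter_upwards [h] with t ht
    simp [ht]

theorem exists_weakConv_subseq {H : Type*} [NormedAddCommGroup H]
    [InnerProductSpace ℝ H] [CompleteSpace H]
    (u : ℕ → H) (M : ℝ) (hM : ∀ k, ‖u k‖ ≤ M) :
    ∃ φ : ℕ → ℕ, StrictMono φ ∧ ∃ x : H, WeakConv (u ∘ φ) x := by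
  have hM0 : 0 ≤ M := le_trans (norm_nonneg _) (hM 0)
  -- Step 1: diagonal extraction via compactness of a product of intervals
  set g : ℕ → ℕ → ℝ := fun k j => ⟪u k, u j⟫ with hg
  have hgmem : ∀ k, g k ∈ Set.univ.pi (fun j => Set.Icc (-(M * ‖u j‖)) (M * ‖u j‖)) := by
    intro k j _
    have h1 : |⟪u k, u j⟫| ≤ ‖u k‖ * ‖u j‖ := abs_real_inner_le_norm _ _
    have h2 : ‖u k‖ * ‖u j‖ ≤ M * ‖u j‖ :=
      mul_le_mul_of_nonneg_right (hM k) (norm_nonneg _)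
    have := abs_le.mp (h1.trans h2)
    exact ⟨this.1, this.2⟩
  obtain ⟨f, -, φ, hφ, hconv⟩ :=
    (isCompact_univ_pi (fun j => isCompact_Icc)).tendsto_subseq hgmem
  have hptw : ∀ j, Tendsto (fun k => ⟪u (φ k), u j⟫) atTop (𝓝 (f j)) := by
    intro j
    exact (tendsto_pi_nhds.mp hconv) j
  refine ⟨φ, hφ, ?_⟩
  -- Step 2: the set of z for which ⟪u (φ k), z⟫ is Cauchy
  set A : Set H := {z | CauchySeq fun k => ⟪u (φ k), z⟫} with hA
  have hspan : (Submodule.span ℝ (Set.range u) : Set H) ⊆ A := by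
    intro z hz
    induction hz using Submodule.span_induction with
    | mem z hz =>
      obtain ⟨j, rfl⟩ := hz
      exact (hptw j).cauchySeq
    | zero =>
      simp only [hA, Set.mem_setOf_eq, inner_zero_right]
      exact cauchySeq_const 0
    | add a b _ _ ha hb =>
      have : (fun k => ⟪u (φ k), a + b⟫)
          = fun k => ⟪u (φ k), a⟫ + ⟪u (φ k), b⟫ := by
        funext k; exact inner_add_right _ _ _
      simpa only [hA, Set.mem_setOf_eq, this, Pi.add_def] using ha.add hb
    | smul c a _ ha =>
      have : (fun k => ⟪u (φ k), c • a⟫)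
          = fun k => c * ⟪u (φ k), a⟫ := by
        funext k; exact real_inner_smul_right _ _ _
      obtain ⟨L, hL⟩ := cauchySeq_tendsto_of_complete ha
      simpa only [hA, Set.mem_setOf_eq, this] using (hL.const_mul c).cauchySeq
  have hclos : closure (Submodule.span ℝ (Set.range u) : Set H) ⊆ A := by
    intro z hz
    rw [hA, Set.mem_setOf_eq, Metric.cauchySeq_iff]
    intro ε hε
    obtain ⟨z', hz'mem, hz'⟩ := Metric.mem_closure_iff.mp hz (ε / (3 * (M + 1)))
      (by positivity)
    have hz'A : CauchySeq fun k => ⟪u (φ k), z'⟫ := hspan hz'mem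
    obtain ⟨N, hN⟩ := Metric.cauchySeq_iff.mp hz'A (ε / 3) (by positivity)
    refine ⟨N, fun m hm n hn => ?_⟩
    have key : ∀ k, |⟪u (φ k), z⟫ - ⟪u (φ k), z'⟫| ≤ ε / 3 := by
      intro k
      have : ⟪u (φ k), z⟫ - ⟪u (φ k), z'⟫ = ⟪u (φ k), z - z'⟫ :=
        (inner_sub_right _ _ _).symm
      rw [this]
      calc |⟪u (φ k), z - z'⟫| ≤ ‖u (φ k)‖ * ‖z - z'‖ := abs_real_inner_le_norm _ _
        _ ≤ M * ‖z - z'‖ := mul_le_mul_of_nonneg_right (hM _) (norm_nonneg _)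
        _ ≤ M * (ε / (3 * (M + 1))) := by
            refine mul_le_mul_of_nonneg_left ?_ hM0
            rw [← dist_eq_norm]
            exact hz'.le
        _ ≤ ε / 3 := by
            rw [mul_comm, div_mul_eq_mul_div,
              div_le_div_iff₀ (by positivity) (by norm_num : (0:ℝ) < 3)]
            nlinarith
    have h1 := key m
    have h2 := key n
    have h3 := hN m hm n hn
    rw [Real.dist_eq] at h3 ⊢
    have : ⟪u (φ m), z⟫ - ⟪u (φ n), z⟫
        = (⟪u (φ m), z⟫ - ⟪u (φ m), z'⟫) - (⟪u (φ n), z⟫ - ⟪u (φ n), z'⟫)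
          + (⟪u (φ m), z'⟫ - ⟪u (φ n), z'⟫) := by ring
    rw [this]
    calc |_ + _| ≤ |(⟪u (φ m), z⟫ - ⟪u (φ m), z'⟫) - (⟪u (φ n), z⟫ - ⟪u (φ n), z'⟫)|
          + |⟪u (φ m), z'⟫ - ⟪u (φ n), z'⟫| := abs_add_le _ _
      _ ≤ (|⟪u (φ m), z⟫ - ⟪u (φ m), z'⟫| + |⟪u (φ n), z⟫ - ⟪u (φ n), z'⟫|)
          + |⟪u (φ m), z'⟫ - ⟪u (φ n), z'⟫| := by
            gcongr
            calc |(⟪u (φ m), z⟫ - ⟪u (φ m), z'⟫) - (⟪u (φ n), z⟫ - ⟪u (φ n), z'⟫)|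
                = |(⟪u (φ m), z⟫ - ⟪u (φ m), z'⟫) + -(⟪u (φ n), z⟫ - ⟪u (φ n), z'⟫)| := by
                  rw [sub_eq_add_neg]
              _ ≤ |⟪u (φ m), z⟫ - ⟪u (φ m), z'⟫| + |-(⟪u (φ n), z⟫ - ⟪u (φ n), z'⟫)| :=
                  abs_add_le _ _
              _ = |⟪u (φ m), z⟫ - ⟪u (φ m), z'⟫| + |⟪u (φ n), z⟫ - ⟪u (φ n), z'⟫| := by
                  rw [abs_neg]
      _ < ε := by linarith
  -- Step 3: the closed span, Riesz representation
  set K : Submodule ℝ H := (Submodule.span ℝ (Set.range u)).topologicalClosure with hK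
  have hKclosed : IsClosed (K : Set H) := Submodule.isClosed_topologicalClosure _
  haveI : CompleteSpace K := hKclosed.completeSpace_coe
  have huK : ∀ k, u k ∈ K := fun k =>
    (Submodule.le_topologicalClosure _) (Submodule.subset_span ⟨k, rfl⟩)
  have hKA : ∀ z : K, CauchySeq fun k => ⟪u (φ k), (z : H)⟫ := by
    intro z
    apply hclos
    rw [← Submodule.topologicalClosure_coe]
    exact z.2
  have hexlim : ∀ z : K, ∃ L : ℝ, Tendsto (fun k => ⟪u (φ k), (z : H)⟫) atTop (𝓝 L) :=
    fun z => cauchySeq_tendsto_of_complete (hKA z)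
  choose ℓ hℓ using hexlim
  have hbound : ∀ z : K, ‖ℓ z‖ ≤ M * ‖z‖ := by
    intro z
    rw [Real.norm_eq_abs]
    have habs : Tendsto (fun k => |⟪u (φ k), (z : H)⟫|) atTop (𝓝 |ℓ z|) :=
      (hℓ z).abs
    refine le_of_tendsto habs (Eventually.of_forall fun k => ?_)
    calc |⟪u (φ k), (z : H)⟫| ≤ ‖u (φ k)‖ * ‖(z : H)‖ := abs_real_inner_le_norm _ _
      _ ≤ M * ‖z‖ := mul_le_mul_of_nonneg_right (hM _) (norm_nonneg _)
  set Lmap : K →ₗ[ℝ] ℝ :=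
    { toFun := ℓ
      map_add' := by
        intro a b
        refine tendsto_nhds_unique (hℓ (a + b)) ?_
        have : (fun k => ⟪u (φ k), ((a + b : K) : H)⟫)
            = fun k => ⟪u (φ k), (a : H)⟫ + ⟪u (φ k), (b : H)⟫ := by
          funext k
          rw [Submodule.coe_add, inner_add_right]
        rw [this]
        exact (hℓ a).add (hℓ b)
      map_smul' := by
        intro c a
        refine tendsto_nhds_unique (hℓ (c • a)) ?_
        have : (fun k => ⟪u (φ k), ((c • a : K) : H)⟫)
            = fun k => c * ⟪u (φ k), (a : H)⟫ := by
          funext k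
          rw [Submodule.coe_smul, real_inner_smul_right]
        rw [this]
        exact (hℓ a).const_mul c } with hLmap
  set Lcont : K →L[ℝ] ℝ := Lmap.mkContinuous M hbound with hLcont
  set x₀ : K := (InnerProductSpace.toDual ℝ K).symm Lcont with hx₀
  refine ⟨(x₀ : H), fun z => ?_⟩
  -- decompose z with the orthogonal projection onto K
  set Pz : K := K.orthogonalProjectionOnto z with hPz
  have hperp : z - (Pz : H) ∈ Kᗮ := K.sub_starProjection_mem_orthogonal z
  have heq : ∀ k, ⟪u (φ k), z⟫ = ⟪u (φ k), (Pz : H)⟫ := by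
    intro k
    have h0 : ⟪u (φ k), z - (Pz : H)⟫ = 0 :=
      Submodule.inner_right_of_mem_orthogonal (huK (φ k)) hperp
    have := inner_sub_right (𝕜 := ℝ) (u (φ k)) z (Pz : H)
    rw [h0] at this
    linarith
  have hgoal : ⟪(x₀ : H), z⟫ = ℓ Pz := by
    have h0 : ⟪(x₀ : H), z - (Pz : H)⟫ = 0 :=
      Submodule.inner_right_of_mem_orthogonal x₀.2 hperp
    have h1 : ⟪(x₀ : H), z⟫ = ⟪(x₀ : H), (Pz : H)⟫ := by
      have := inner_sub_right (𝕜 := ℝ) (x₀ : H) z (Pz : H)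
      rw [h0] at this
      linarith
    have h2 : ⟪x₀, Pz⟫ = Lcont Pz := by
      rw [hx₀]
      exact InnerProductSpace.toDual_symm_apply
    rw [h1, ← Submodule.coe_inner, h2]
    rfl
  rw [hgoal]
  have := hℓ Pz
  simp only [Function.comp]
  refine this.congr fun k => (heq k).symm

end helpers

/-- **Convergence** (Theorem A.3): with `α(δ) → 0` and `δ²/α(δ) → 0` as
`δ → 0⁺`, if an `x*`-`S`-minimum-norm solution exists, `δ_k → 0`,
`‖y − y_k‖ ≤ δ_k`, and `x_k` minimizes `J_{α(δ_k),S,y_k}` over `D(F)`, then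
`(x_k)` has a strongly convergent subsequence in `L²(Ω)`, and every strong
limit of a convergent subsequence of `(x_k)` is an `x*`-`S`-minimum-norm
solution. -/
theorem convergence_to_minimum_norm_solution
    {n : ℕ} (Ω : Set (Fin n → ℝ)) (hΩmeas : MeasurableSet Ω)
    (hΩbdd : Bornology.IsBounded Ω)
    {Y : Type*} [NormedAddCommGroup Y] [InnerProductSpace ℝ Y] [CompleteSpace Y]
    (D : Set (Lp ℝ 2 (volume.restrict Ω))) (hD : D.Nonempty)
    (F : Lp ℝ 2 (volume.restrict Ω) → Y)
    (hFcont : ContinuousOn F D)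
    (hFweak : ∀ (u : ℕ → Lp ℝ 2 (volume.restrict Ω))
      (x : Lp ℝ 2 (volume.restrict Ω)) (z : Y),
      (∀ k, u k ∈ D) → WeakConv u x → WeakConv (fun k => F (u k)) z →
        x ∈ D ∧ F x = z)
    (xstar : Lp ℝ 2 (volume.restrict Ω))
    (S : Set (Fin n → ℝ)) (hSmeas : MeasurableSet S) (hSΩ : S ⊆ Ω)
    (hxstar : ZeroOff Ω S xstar)
    (y : Y)
    (α : ℝ → ℝ) (hαpos : ∀ δ > (0 : ℝ), 0 < α δ)
    (hα0 : Tendsto α (𝓝[>] (0 : ℝ)) (𝓝 0))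
    (hδ2α : Tendsto (fun δ => δ ^ 2 / α δ) (𝓝[>] (0 : ℝ)) (𝓝 0))
    (hexists : ∃ xdag, IsMNS Ω D F xstar S y xdag)
    (δs : ℕ → ℝ) (hδpos : ∀ k, 0 < δs k) (hδ0 : Tendsto δs atTop (𝓝 0))
    (ys : ℕ → Y) (hys : ∀ k, ‖y - ys k‖ ≤ δs k)
    (xs : ℕ → Lp ℝ 2 (volume.restrict Ω))
    (hxs : ∀ k, IsMinimizer (J Ω F xstar (α (δs k)) S (ys k)) D (xs k)) :
    (∃ φ : ℕ → ℕ, StrictMono φ ∧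
      ∃ xbar : Lp ℝ 2 (volume.restrict Ω), Tendsto (xs ∘ φ) atTop (𝓝 xbar)) ∧
    (∀ (φ : ℕ → ℕ), StrictMono φ →
      ∀ xbar : Lp ℝ 2 (volume.restrict Ω), Tendsto (xs ∘ φ) atTop (𝓝 xbar) →
        IsMNS Ω D F xstar S y xbar) := by
  classical
  have hTmeas : MeasurableSet (Ω \ S) := hΩmeas.diff hSmeas
  obtain ⟨xd, hxdD, hxdF, hxdZ, hxdMin⟩ := hexists
  set ρ : ℝ := ‖xd - xstar‖ with hρ
  have hρ0 : 0 ≤ ρ := norm_nonneg _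
  -- splitting of the squared norm
  have hres : (volume.restrict Ω).restrict (S ∪ (Ω \ S)) = volume.restrict Ω := by
    apply Measure.restrict_eq_self_of_ae_mem
    filter_upwards [ae_restrict_mem hΩmeas] with t ht
    by_cases h : t ∈ S
    · exact Or.inl h
    · exact Or.inr ⟨ht, h⟩
  have hsplit : ∀ v : Lp ℝ 2 (volume.restrict Ω),
      ‖v‖ ^ 2 = sqInt Ω S v + sqInt Ω (Ω \ S) v := by
    intro v
    have h1 : ‖v‖ ^ 2
        = ∫ t in (S ∪ (Ω \ S)), (v t) ^ 2 ∂(volume.restrict Ω) := by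
      rw [norm_sq_L2' v]
      have h2 : (∫ t in (S ∪ (Ω \ S)), (v t) ^ 2 ∂(volume.restrict Ω))
          = ∫ t, (v t) ^ 2 ∂((volume.restrict Ω).restrict (S ∪ (Ω \ S))) := rfl
      rw [h2, hres]
    rw [h1]
    exact setIntegral_union Set.disjoint_sdiff_right hTmeas
      (sq_integrable' v).integrableOn (sq_integrable' v).integrableOn
  -- zero a.e. facts for the minimum-norm solution
  have hxstar' : ∀ᵐ t ∂((volume.restrict Ω).restrict (Ω \ S)), xstar t = 0 := hxstar
  have hxdZ' : ∀ᵐ t ∂((volume.restrict Ω).restrict (Ω \ S)), xd t = 0 := hxdZ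
  have hxdT : sqInt Ω (Ω \ S) (xd - xstar) = 0 := by
    unfold sqInt
    rw [sqIntT_eq_zero_iff]
    filter_upwards [ae_restrict_of_ae (Lp.coeFn_sub xd xstar), hxdZ', hxstar']
      with t h1 h2 h3
    rw [h1]
    simp [h2, h3]
  have hxdS : sqInt Ω S (xd - xstar) = ρ ^ 2 := by
    have := hsplit (xd - xstar)
    rw [hxdT, ← hρ] at this
    linarith
  -- parameters along the sequence
  have hδin : Tendsto δs atTop (𝓝[>] (0 : ℝ)) :=
    tendsto_nhdsWithin_of_tendsto_nhds_of_eventually_within δs hδ0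
      (Eventually.of_forall fun k => hδpos k)
  have hαk0 : Tendsto (fun k => α (δs k)) atTop (𝓝 0) := hα0.comp hδin
  have hq0 : Tendsto (fun k => δs k ^ 2 / α (δs k)) atTop (𝓝 0) := hδ2α.comp hδin
  have hδsq0 : Tendsto (fun k => δs k ^ 2) atTop (𝓝 0) := by
    have := hδ0.pow 2
    simpa using this
  have hαpos' : ∀ k, 0 < α (δs k) := fun k => hαpos _ (hδpos k)
  -- the J-comparison bounds
  set c : ℕ → ℝ := fun k => δs k ^ 2 + α (δs k) * ρ ^ 2 with hc
  have hc0 : Tendsto c atTop (𝓝 0) := by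
    rw [hc]
    have := hδsq0.add (hαk0.mul_const (ρ ^ 2))
    simpa using this
  have hcnn : ∀ k, 0 ≤ c k := fun k =>
    add_nonneg (sq_nonneg _) (mul_nonneg (hαpos' k).le (sq_nonneg _))
  have hJle : ∀ k, J Ω F xstar (α (δs k)) S (ys k) (xs k) ≤ c k := by
    intro k
    have h1 := (hxs k).2 xd hxdD
    have h2 : J Ω F xstar (α (δs k)) S (ys k) xd
        = ‖y - ys k‖ ^ 2 + α (δs k) * ρ ^ 2 := by
      unfold J
      rw [hxdF, hxdS, hxdT]
      ring
    have h3 : ‖y - ys k‖ ^ 2 ≤ δs k ^ 2 :=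
      pow_le_pow_left₀ (norm_nonneg _) (hys k) 2
    calc J Ω F xstar (α (δs k)) S (ys k) (xs k)
        ≤ ‖y - ys k‖ ^ 2 + α (δs k) * ρ ^ 2 := h2 ▸ h1
      _ ≤ c k := by simp only [hc]; linarith
  set A : ℕ → ℝ := fun k => ‖F (xs k) - ys k‖ ^ 2 with hA
  set B : ℕ → ℝ := fun k => sqInt Ω S (xs k - xstar) with hB
  set C : ℕ → ℝ := fun k => sqInt Ω (Ω \ S) (xs k - xstar) with hC
  have hJeq : ∀ k, J Ω F xstar (α (δs k)) S (ys k) (xs k)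
      = A k + (α (δs k) * B k + C k) := by
    intro k
    simp only [hA, hB, hC]
    rfl
  have hAnn : ∀ k, 0 ≤ A k := fun k => by simp only [hA]; positivity
  have hBnn : ∀ k, 0 ≤ B k := fun k => by
    simp only [hB]; exact sqIntT_nonneg _ _
  have hCnn : ∀ k, 0 ≤ C k := fun k => by
    simp only [hC]; exact sqIntT_nonneg _ _
  have hAle : ∀ k, A k ≤ c k := by
    intro k
    have h := hJle k
    rw [hJeq k] at h
    nlinarith [mul_nonneg (hαpos' k).le (hBnn k), hCnn k]
  have hCle : ∀ k, C k ≤ c k := by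
    intro k
    have h := hJle k
    rw [hJeq k] at h
    nlinarith [mul_nonneg (hαpos' k).le (hBnn k), hAnn k]
  have hBle : ∀ k, B k ≤ δs k ^ 2 / α (δs k) + ρ ^ 2 := by
    intro k
    have h := hJle k
    rw [hJeq k] at h
    have h2 : α (δs k) * B k ≤ c k := by linarith [hAnn k, hCnn k]
    have h3 : B k ≤ c k / α (δs k) := by
      rw [le_div_iff₀ (hαpos' k), mul_comm]
      exact h2
    calc B k ≤ c k / α (δs k) := h3
      _ = δs k ^ 2 / α (δs k) + ρ ^ 2 := by
          simp only [hc]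
          rw [add_div, mul_div_cancel_left₀ _ (hαpos' k).ne']
  -- the norm bound sequence
  set b : ℕ → ℝ := fun k => (δs k ^ 2 / α (δs k) + ρ ^ 2) + c k with hb
  have hb_lim : Tendsto b atTop (𝓝 (ρ ^ 2)) := by
    rw [hb]
    have := (hq0.add (tendsto_const_nhds (x := ρ ^ 2))).add hc0
    simpa using this
  have hnormb : ∀ k, ‖xs k - xstar‖ ^ 2 ≤ b k := by
    intro k
    have hBk : B k = sqInt Ω S (xs k - xstar) := by simp only [hB]
    have hCk : C k = sqInt Ω (Ω \ S) (xs k - xstar) := by simp only [hC]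
    have hbk : b k = (δs k ^ 2 / α (δs k) + ρ ^ 2) + c k := by simp only [hb]
    rw [hsplit (xs k - xstar), ← hBk, ← hCk, hbk]
    have := hBle k
    have := hCle k
    linarith
  have hbnn : ∀ k, 0 ≤ b k := fun k => le_trans (sq_nonneg _) (hnormb k)
  -- F (xs k) → y strongly
  have hFy : Tendsto (fun k => F (xs k)) atTop (𝓝 y) := by
    rw [tendsto_iff_norm_sub_tendsto_zero]
    apply squeeze_zero_norm (a := fun k => Real.sqrt (c k) + δs k)
    · intro k
      rw [norm_norm]
      have hAk : A k = ‖F (xs k) - ys k‖ ^ 2 := by simp only [hA]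
      have h1 : ‖F (xs k) - ys k‖ ≤ Real.sqrt (c k) := by
        refine (Real.le_sqrt (norm_nonneg _) (hcnn k)).mpr ?_
        rw [← hAk]
        exact hAle k
      have h2 : ‖ys k - y‖ ≤ δs k := by
        rw [norm_sub_rev]
        exact hys k
      calc ‖F (xs k) - y‖ ≤ ‖F (xs k) - ys k‖ + ‖ys k - y‖ := by
            have := norm_add_le (F (xs k) - ys k) (ys k - y)
            simpa using this
        _ ≤ Real.sqrt (c k) + δs k := add_le_add h1 h2
    · have := hc0.sqrt.add hδ0
      simpa using this
  -- Main claim: any weak limit along a subsequence gives an MNS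
  have claim : ∀ (ψ : ℕ → ℕ), StrictMono ψ → ∀ w : Lp ℝ 2 (volume.restrict Ω),
      WeakConv (fun k => xs (ψ k) - xstar) w →
      IsMNS Ω D F xstar S y (w + xstar) ∧ ‖w‖ = ρ := by
    intro ψ hψ w hw
    have hψtop : Tendsto ψ atTop atTop := hψ.tendsto_atTop
    -- weak convergence of xs ∘ ψ
    have hwx : WeakConv (fun k => xs (ψ k)) (w + xstar) := by
      intro z
      have h1 := hw z
      have h2 : ∀ k, ⟪xs (ψ k), z⟫ = ⟪xs (ψ k) - xstar, z⟫ + ⟪xstar, z⟫ := by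
        intro k
        rw [inner_sub_left]
        ring
      have h3 : ⟪w + xstar, z⟫ = ⟪w, z⟫ + ⟪xstar, z⟫ := inner_add_left _ _ _
      rw [h3]
      exact (h1.add tendsto_const_nhds).congr fun k => (h2 k).symm
    -- F values converge weakly to y
    have hFw : WeakConv (fun k => F (xs (ψ k))) y := by
      intro z
      exact ((hFy.comp hψtop).inner tendsto_const_nhds)
    obtain ⟨hwD, hwF⟩ := hFweak (fun k => xs (ψ k)) (w + xstar) y
      (fun k => (hxs (ψ k)).1) hwx hFw
    -- ZeroOff of the weak limit
    have hC0 : Tendsto (fun k => C (ψ k)) atTop (𝓝 0) := by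
      apply squeeze_zero (fun k => hCnn _) (fun k => hCle _)
      exact hc0.comp hψtop
    have hsqw : (∫ t in (Ω \ S), (w t) ^ 2 ∂(volume.restrict Ω)) = 0 := by
      set z : Lp ℝ 2 (volume.restrict Ω) := indLp (Ω \ S) hTmeas w with hz
      have key : ∀ k, ⟪xs (ψ k) - xstar, z⟫
          = ⟪indLp (Ω \ S) hTmeas (xs (ψ k) - xstar), z⟫ := by
        intro k
        rw [hz, inner_indLp, inner_indLp]
        apply integral_congr_ae
        filter_upwards [ae_restrict_of_ae
          (indLp_coeFn (Ω \ S) hTmeas (xs (ψ k) - xstar)), ae_restrict_mem hTmeas]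
          with t h1 h2
        rw [h1, Set.indicator_of_mem h2]
      have hCψ : ∀ k, C (ψ k)
          = ∫ t in (Ω \ S), ((xs (ψ k) - xstar) t) ^ 2 ∂(volume.restrict Ω) := by
        intro k
        simp only [hC]
        rfl
      have hbound : ∀ k, |⟪xs (ψ k) - xstar, z⟫| ≤ Real.sqrt (C (ψ k)) * ‖z‖ := by
        intro k
        rw [key k]
        have h1 := abs_real_inner_le_norm (indLp (Ω \ S) hTmeas (xs (ψ k) - xstar)) z
        have h2 : ‖indLp (Ω \ S) hTmeas (xs (ψ k) - xstar)‖
            = Real.sqrt (C (ψ k)) := by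
          rw [← Real.sqrt_sq (norm_nonneg (indLp (Ω \ S) hTmeas (xs (ψ k) - xstar)))]
          rw [norm_sq_indLp, hCψ k]
        rw [h2] at h1
        exact h1
      have hlim0 : Tendsto (fun k => ⟪xs (ψ k) - xstar, z⟫) atTop (𝓝 0) := by
        apply squeeze_zero_norm hbound
        have := hC0.sqrt.mul_const ‖z‖
        simpa using this
      have huniq : ⟪w, z⟫ = 0 := tendsto_nhds_unique (hw z) hlim0
      have hwz : ⟪w, z⟫ = ∫ t in (Ω \ S), (w t) ^ 2 ∂(volume.restrict Ω) := by
        rw [hz, inner_indLp]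
        congr 1
        funext t
        ring
      rw [← hwz, huniq]
    have hwae : ∀ᵐ t ∂((volume.restrict Ω).restrict (Ω \ S)), w t = 0 :=
      (sqIntT_eq_zero_iff (Ω \ S) w).mp hsqw
    have hwZ : ZeroOff Ω S (w + xstar) := by
      unfold ZeroOff
      filter_upwards [ae_restrict_of_ae (Lp.coeFn_add w xstar), hwae, hxstar']
        with t h1 h2 h3
      rw [h1]
      simp [h2, h3]
    -- norm bound: ‖w‖ ≤ ρ via weak lower semicontinuity
    have hwle : ‖w‖ ≤ ρ := by
      have h1 : Tendsto (fun k => ⟪xs (ψ k) - xstar, w⟫) atTop (𝓝 ⟪w, w⟫) := hw w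
      have h2 : ∀ k, ⟪xs (ψ k) - xstar, w⟫ ≤ Real.sqrt (b (ψ k)) * ‖w‖ := by
        intro k
        have ha := abs_real_inner_le_norm (xs (ψ k) - xstar) w
        have hb' : ‖xs (ψ k) - xstar‖ ≤ Real.sqrt (b (ψ k)) :=
          (Real.le_sqrt (norm_nonneg _) (hbnn _)).mpr (hnormb (ψ k))
        calc ⟪xs (ψ k) - xstar, w⟫ ≤ |⟪xs (ψ k) - xstar, w⟫| := le_abs_self _
          _ ≤ ‖xs (ψ k) - xstar‖ * ‖w‖ := ha
          _ ≤ Real.sqrt (b (ψ k)) * ‖w‖ :=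
              mul_le_mul_of_nonneg_right hb' (norm_nonneg _)
      have h3 : Tendsto (fun k => Real.sqrt (b (ψ k)) * ‖w‖) atTop
          (𝓝 (ρ * ‖w‖)) := by
        have := ((hb_lim.comp hψtop).sqrt).mul_const ‖w‖
        rwa [Real.sqrt_sq hρ0] at this
      have h4 : ⟪w, w⟫ ≤ ρ * ‖w‖ := le_of_tendsto_of_tendsto' h1 h3 h2
      rw [real_inner_self_eq_norm_sq] at h4
      nlinarith [norm_nonneg w]
    have hwge : ρ ≤ ‖w‖ := by
      have := hxdMin (w + xstar) hwD hwF hwZ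
      rwa [add_sub_cancel_right] at this
    refine ⟨⟨hwD, hwF, hwZ, fun x hxD hxF hxZ => ?_⟩, le_antisymm hwle hwge⟩
    rw [add_sub_cancel_right]
    exact le_trans hwle (hxdMin x hxD hxF hxZ)
  constructor
  · -- existence of a strongly convergent subsequence
    obtain ⟨Mb, hMb⟩ := hb_lim.bddAbove_range
    have hMb' : ∀ k, b k ≤ Mb := fun k => hMb ⟨k, rfl⟩
    have hbd : ∀ k, ‖xs k - xstar‖ ≤ Real.sqrt Mb := by
      intro k
      refine (Real.le_sqrt (norm_nonneg _) ?_).mpr ((hnormb k).trans (hMb' k))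
      exact le_trans (hbnn 0) (hMb' 0)
    obtain ⟨φ, hφ, w, hweak⟩ := exists_weakConv_subseq
      (fun k => xs k - xstar) (Real.sqrt Mb) hbd
    have hweak' : WeakConv (fun k => xs (φ k) - xstar) w := hweak
    obtain ⟨_, hwnorm⟩ := claim φ hφ w hweak'
    refine ⟨φ, hφ, w + xstar, ?_⟩
    have hφtop : Tendsto φ atTop atTop := hφ.tendsto_atTop
    have hsq : Tendsto (fun k => ‖(xs (φ k) - xstar) - w‖ ^ 2) atTop (𝓝 0) := by
      apply squeeze_zero (fun k => sq_nonneg _)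
        (g := fun k => b (φ k) - 2 * ⟪xs (φ k) - xstar, w⟫ + ρ ^ 2)
      · intro k
        rw [norm_sub_sq_real]
        have h1 := hnormb (φ k)
        have h2 : ‖w‖ ^ 2 = ρ ^ 2 := by rw [hwnorm]
        linarith
      · have h1 : Tendsto (fun k => ⟪xs (φ k) - xstar, w⟫) atTop (𝓝 ⟪w, w⟫) :=
          hweak' w
        have h2 : ⟪w, w⟫ = ρ ^ 2 := by
          rw [real_inner_self_eq_norm_sq, hwnorm]
        rw [h2] at h1
        have h3 := ((hb_lim.comp hφtop).sub (h1.const_mul 2)).add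
          (tendsto_const_nhds (x := ρ ^ 2))
        have heq : (ρ ^ 2 - 2 * ρ ^ 2) + ρ ^ 2 = 0 := by ring
        rwa [heq] at h3
    have hnrm : Tendsto (fun k => ‖(xs (φ k) - xstar) - w‖) atTop (𝓝 0) := by
      have h := hsq.sqrt
      rw [Real.sqrt_zero] at h
      refine h.congr fun k => ?_
      rw [Real.sqrt_sq (norm_nonneg _)]
    rw [tendsto_iff_norm_sub_tendsto_zero]
    refine hnrm.congr fun k => ?_
    congr 1
    simp only [Function.comp]
    abel
  · -- every strong limit of a subsequence is an MNS
    intro φ hφ xbar hlim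
    have hweak : WeakConv (fun k => xs (φ k) - xstar) (xbar - xstar) := by
      intro z
      have h1 : Tendsto (fun k => xs (φ k) - xstar) atTop (𝓝 (xbar - xstar)) := by
        have h2 : Tendsto (xs ∘ φ) atTop (𝓝 xbar) := hlim
        have := h2.sub (tendsto_const_nhds (x := xstar))
        exact this
      exact h1.inner tendsto_const_nhds
    obtain ⟨hMNS, -⟩ := claim φ hφ (xbar - xstar) hweak
    rwa [sub_add_cancel] at hMNS
end
end

section
/- In the setting of the convergence theorem—δ_k → 0, ‖y − y_k‖_Y ≤ δ_k, α_k := α(δ_k) with α(δ) → 0 and δ²/α(δ) → 0, x† an x*-S-minimum-norm solution, and x_k a minimizer of J_{α_k,S,y_k} over D(F)—the following hold: (a) F(x_k) → y strongly in Y; (b) ‖x_k‖_{S⁻} → 0; and (c) limsup_{k→∞} ‖x_k − x*‖_{S⁺} ≤ ‖x† − x*‖_{S⁺}. -/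
open MeasureTheory Filter
open scoped RealInnerProductSpace ENNReal Topology

noncomputable section

private lemma sqrt_add_le' {x y : ℝ} (hx : 0 ≤ x) (hy : 0 ≤ y) :
    Real.sqrt (x + y) ≤ Real.sqrt x + Real.sqrt y := by
  have h1 := Real.sqrt_nonneg x
  have h2 := Real.sqrt_nonneg y
  have h3 := Real.sq_sqrt hx
  have h4 := Real.sq_sqrt hy
  calc Real.sqrt (x + y) ≤ Real.sqrt ((Real.sqrt x + Real.sqrt y) ^ 2) := by
        apply Real.sqrt_le_sqrt; nlinarith
    _ = Real.sqrt x + Real.sqrt y := Real.sqrt_sq (by positivity)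

/-- In the setting of the convergence theorem (Theorem A.3):
(a) `F(x_k) → y` strongly in `Y`; (b) `‖x_k‖_{S⁻} → 0`; and
(c) `limsup_k ‖x_k − x*‖_{S⁺} ≤ ‖x† − x*‖_{S⁺}` (stated in the standard
`ε`-form to avoid junk values of real `limsup`). -/
theorem convergence_auxiliary_estimates
    {n : ℕ} (Ω : Set (Fin n → ℝ)) (hΩmeas : MeasurableSet Ω)
    (hΩbdd : Bornology.IsBounded Ω)
    {Y : Type*} [NormedAddCommGroup Y] [InnerProductSpace ℝ Y] [CompleteSpace Y]
    (D : Set (Lp ℝ 2 (volume.restrict Ω))) (hD : D.Nonempty)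
    (F : Lp ℝ 2 (volume.restrict Ω) → Y)
    (hFcont : ContinuousOn F D)
    (hFweak : ∀ (u : ℕ → Lp ℝ 2 (volume.restrict Ω))
      (x : Lp ℝ 2 (volume.restrict Ω)) (z : Y),
      (∀ k, u k ∈ D) → WeakConv u x → WeakConv (fun k => F (u k)) z →
        x ∈ D ∧ F x = z)
    (xstar : Lp ℝ 2 (volume.restrict Ω))
    (S : Set (Fin n → ℝ)) (hSmeas : MeasurableSet S) (hSΩ : S ⊆ Ω)
    (hxstar : ZeroOff Ω S xstar)
    (y : Y)
    (α : ℝ → ℝ) (hαpos : ∀ δ > (0 : ℝ), 0 < α δ)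
    (hα0 : Tendsto α (𝓝[>] (0 : ℝ)) (𝓝 0))
    (hδ2α : Tendsto (fun δ => δ ^ 2 / α δ) (𝓝[>] (0 : ℝ)) (𝓝 0))
    (xdag : Lp ℝ 2 (volume.restrict Ω)) (hxdag : IsMNS Ω D F xstar S y xdag)
    (δs : ℕ → ℝ) (hδpos : ∀ k, 0 < δs k) (hδ0 : Tendsto δs atTop (𝓝 0))
    (ys : ℕ → Y) (hys : ∀ k, ‖y - ys k‖ ≤ δs k)
    (xs : ℕ → Lp ℝ 2 (volume.restrict Ω))
    (hxs : ∀ k, IsMinimizer (J Ω F xstar (α (δs k)) S (ys k)) D (xs k)) :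
    Tendsto (fun k => F (xs k)) atTop (𝓝 y) ∧
    Tendsto (fun k => Real.sqrt (sqInt Ω (Ω \ S) (xs k))) atTop (𝓝 0) ∧
    (∀ ε > (0 : ℝ), ∀ᶠ k in atTop,
      Real.sqrt (sqInt Ω S (xs k - xstar)) ≤
        Real.sqrt (sqInt Ω S (xdag - xstar)) + ε) := by
  classical
  set c := sqInt Ω S (xdag - xstar) with hc
  have hc0 : 0 ≤ c := integral_nonneg fun t => sq_nonneg _
  have hαk : ∀ k, 0 < α (δs k) := fun k => hαpos _ (hδpos k)
  have hδmem : Tendsto δs atTop (𝓝[>] (0 : ℝ)) :=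
    tendsto_nhdsWithin_of_tendsto_nhds_of_eventually_within _ hδ0
      (Eventually.of_forall fun k => hδpos k)
  have hαto0 : Tendsto (fun k => α (δs k)) atTop (𝓝 0) := hα0.comp hδmem
  have hratio : Tendsto (fun k => δs k ^ 2 / α (δs k)) atTop (𝓝 0) := hδ2α.comp hδmem
  set B : ℕ → ℝ := fun k => δs k ^ 2 + α (δs k) * c with hBdef
  have hBnonneg : ∀ k, 0 ≤ B k := fun k => by
    simp only [hBdef]
    have := (hαk k).le
    nlinarith [sq_nonneg (δs k), hc0]
  have hB0 : Tendsto B atTop (𝓝 0) := by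
    have h1 : Tendsto (fun k => δs k ^ 2) atTop (𝓝 0) := by
      simpa using hδ0.pow 2
    have h2 : Tendsto (fun k => α (δs k) * c) atTop (𝓝 0) := by
      simpa using hαto0.mul_const c
    simpa using h1.add h2
  -- the key estimate J(x_k) ≤ B k
  have hdz : sqInt Ω (Ω \ S) (xdag - xstar) = 0 := by
    unfold sqInt
    apply integral_eq_zero_of_ae
    filter_upwards [ae_restrict_of_ae (Lp.coeFn_sub xdag xstar), hxdag.2.2.1, hxstar]
      with t h1 h2 h3
    simp only [Pi.zero_apply]
    rw [h1, Pi.sub_apply, h2, h3]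
    norm_num
  have hkey : ∀ k, J Ω F xstar (α (δs k)) S (ys k) (xs k) ≤ B k := by
    intro k
    have h1 : J Ω F xstar (α (δs k)) S (ys k) (xs k)
        ≤ J Ω F xstar (α (δs k)) S (ys k) xdag := (hxs k).2 xdag hxdag.1
    have h2 : J Ω F xstar (α (δs k)) S (ys k) xdag
        = ‖y - ys k‖ ^ 2 + α (δs k) * c := by
      unfold J
      rw [hxdag.2.1, hdz, ← hc, add_zero]
    have h3 : ‖y - ys k‖ ^ 2 ≤ δs k ^ 2 :=
      pow_le_pow_left₀ (norm_nonneg _) (hys k) 2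
    rw [h2] at h1
    simpa [hBdef] using h1.trans (by linarith)
  have hsqS_nonneg : ∀ k, 0 ≤ sqInt Ω S (xs k - xstar) :=
    fun k => integral_nonneg fun t => sq_nonneg _
  have hsqSc_nonneg : ∀ k, 0 ≤ sqInt Ω (Ω \ S) (xs k - xstar) :=
    fun k => integral_nonneg fun t => sq_nonneg _
  have hFbound : ∀ k, ‖F (xs k) - ys k‖ ^ 2 ≤ B k := by
    intro k
    have := hkey k
    unfold J at this
    have h1 := mul_nonneg (hαk k).le (hsqS_nonneg k)
    have h2 := hsqSc_nonneg k
    linarith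
  have hSbound : ∀ k, sqInt Ω S (xs k - xstar) ≤ c + δs k ^ 2 / α (δs k) := by
    intro k
    have h0 := hkey k
    unfold J at h0
    have h1 := sq_nonneg ‖F (xs k) - ys k‖
    have h2 := hsqSc_nonneg k
    have h4 := hαk k
    simp only [hBdef] at h0
    rw [← sub_nonneg]
    have hexp : c + δs k ^ 2 / α (δs k) - sqInt Ω S (xs k - xstar)
        = (α (δs k) * c + δs k ^ 2 - α (δs k) * sqInt Ω S (xs k - xstar)) / α (δs k) := by
      field_simp
    rw [hexp]
    apply div_nonneg _ h4.le
    linarith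
  have hScbound : ∀ k, sqInt Ω (Ω \ S) (xs k - xstar) ≤ B k := by
    intro k
    have h0 := hkey k
    unfold J at h0
    have h1 := sq_nonneg ‖F (xs k) - ys k‖
    have h2 := mul_nonneg (hαk k).le (hsqS_nonneg k)
    linarith
  refine ⟨?_, ?_, ?_⟩
  · -- (a)
    rw [tendsto_iff_dist_tendsto_zero]
    apply squeeze_zero (fun k => dist_nonneg)
      (g := fun k => Real.sqrt (B k) + δs k)
    · intro k
      have h1 : dist (F (xs k)) y ≤ dist (F (xs k)) (ys k) + dist (ys k) y :=
        dist_triangle _ _ _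
      have h2 : dist (F (xs k)) (ys k) ≤ Real.sqrt (B k) := by
        rw [dist_eq_norm]
        exact (Real.le_sqrt (norm_nonneg _) (hBnonneg k)).mpr (hFbound k)
      have h3 : dist (ys k) y ≤ δs k := by
        rw [dist_eq_norm, norm_sub_rev]; exact hys k
      linarith
    · have hs : Tendsto (fun k => Real.sqrt (B k)) atTop (𝓝 0) := by
        have := (Real.continuous_sqrt.tendsto 0).comp hB0
        simpa [Function.comp_def] using this
      simpa using hs.add hδ0
  · -- (b)
    have hcongr : ∀ k, sqInt Ω (Ω \ S) (xs k) = sqInt Ω (Ω \ S) (xs k - xstar) := by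
      intro k
      unfold sqInt
      apply integral_congr_ae
      filter_upwards [ae_restrict_of_ae (Lp.coeFn_sub (xs k) xstar), hxstar]
        with t h1 h2
      rw [h1, Pi.sub_apply, h2, sub_zero]
    have h0 : Tendsto (fun k => sqInt Ω (Ω \ S) (xs k)) atTop (𝓝 0) := by
      apply squeeze_zero (fun k => by rw [hcongr k]; exact hsqSc_nonneg k)
        (fun k => by rw [hcongr k]; exact hScbound k) hB0
    have := (Real.continuous_sqrt.tendsto 0).comp h0
    simpa [Function.comp_def] using this
  · -- (c)
    intro ε hε
    have hsr : Tendsto (fun k => Real.sqrt (δs k ^ 2 / α (δs k))) atTop (𝓝 0) := by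
      have := (Real.continuous_sqrt.tendsto 0).comp hratio
      simpa [Function.comp_def] using this
    have h1 : ∀ᶠ k in atTop, Real.sqrt (δs k ^ 2 / α (δs k)) < ε :=
      hsr.eventually (gt_mem_nhds hε)
    filter_upwards [h1] with k hk
    have hrat_nonneg : 0 ≤ δs k ^ 2 / α (δs k) :=
      div_nonneg (sq_nonneg _) (hαk k).le
    calc Real.sqrt (sqInt Ω S (xs k - xstar))
        ≤ Real.sqrt (c + δs k ^ 2 / α (δs k)) := Real.sqrt_le_sqrt (hSbound k)
      _ ≤ Real.sqrt c + Real.sqrt (δs k ^ 2 / α (δs k)) := sqrt_add_le' hc0 hrat_nonneg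
      _ ≤ Real.sqrt (sqInt Ω S (xdag - xstar)) + ε := by rw [hc]; linarith
end
end

section
/- (Basic inequality for minimizers.) Let y ∈ Y, let x† ∈ D(F) satisfy F(x†) = y and x† = 0 a.e. on Ω∖S, assume x* = 0 a.e. on Ω∖S, let y^δ ∈ Y with ‖y − y^δ‖_Y ≤ δ, and let α > 0. Then every minimizer x of J_{α,S,y^δ} over D(F) satisfies ‖F(x) − y^δ‖_Y² + α‖x − x†‖_{S⁺}² + ‖x − x†‖_{S⁻}² ≤ δ² + 2α⟨x† − x*, x† − x⟩_{L²(Ω)}. -/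
open MeasureTheory Filter
open scoped RealInnerProductSpace ENNReal Topology

noncomputable section

/-- **Basic inequality for minimizers**: if `F(x†) = y`, `x† = 0` a.e. on
`Ω ∖ S`, `x* = 0` a.e. on `Ω ∖ S`, and `‖y − y^δ‖ ≤ δ`, then every minimizer
`x` of `J_{α,S,y^δ}` over `D(F)` satisfies
`‖F(x) − y^δ‖² + α‖x − x†‖_{S⁺}² + ‖x − x†‖_{S⁻}² ≤ δ² + 2α⟨x† − x*, x† − x⟩`. -/
theorem basic_inequality_for_minimizers
    {n : ℕ} (Ω : Set (Fin n → ℝ)) (hΩmeas : MeasurableSet Ω)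
    (hΩbdd : Bornology.IsBounded Ω)
    {Y : Type*} [NormedAddCommGroup Y] [InnerProductSpace ℝ Y] [CompleteSpace Y]
    (D : Set (Lp ℝ 2 (volume.restrict Ω))) (hD : D.Nonempty)
    (F : Lp ℝ 2 (volume.restrict Ω) → Y)
    (hFcont : ContinuousOn F D)
    (hFweak : ∀ (u : ℕ → Lp ℝ 2 (volume.restrict Ω))
      (x : Lp ℝ 2 (volume.restrict Ω)) (z : Y),
      (∀ k, u k ∈ D) → WeakConv u x → WeakConv (fun k => F (u k)) z →
        x ∈ D ∧ F x = z)
    (xstar : Lp ℝ 2 (volume.restrict Ω))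
    (S : Set (Fin n → ℝ)) (hSmeas : MeasurableSet S) (hSΩ : S ⊆ Ω)
    (hxstar : ZeroOff Ω S xstar)
    (y : Y)
    (xdag : Lp ℝ 2 (volume.restrict Ω)) (hxdagD : xdag ∈ D)
    (hxdagF : F xdag = y) (hxdag0 : ZeroOff Ω S xdag)
    (δ : ℝ) (yδ : Y) (hyδ : ‖y - yδ‖ ≤ δ)
    (α : ℝ) (hα : 0 < α)
    (x : Lp ℝ 2 (volume.restrict Ω))
    (hx : IsMinimizer (J Ω F xstar α S yδ) D x) :
    ‖F x - yδ‖ ^ 2 + α * sqInt Ω S (x - xdag) + sqInt Ω (Ω \ S) (x - xdag) ≤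
      δ ^ 2 + 2 * α * ⟪xdag - xstar, xdag - x⟫ := by
  classical
  have hmul : ∀ u v : Lp ℝ 2 (volume.restrict Ω),
      Integrable (fun t => u t * v t) (volume.restrict Ω) := by
    intro u v
    simpa [mul_comm] using L2.integrable_inner (𝕜 := ℝ) u v
  have hinner : ∀ u v : Lp ℝ 2 (volume.restrict Ω),
      ⟪u, v⟫ = ∫ t, u t * v t ∂(volume.restrict Ω) := by
    intro u v
    simpa [mul_comm] using L2.inner_def (𝕜 := ℝ) u v
  obtain ⟨a, ha⟩ : ∃ a, a = x - xdag := ⟨_, rfl⟩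
  obtain ⟨b, hb⟩ : ∃ b, b = xdag - xstar := ⟨_, rfl⟩
  -- b vanishes a.e. on the restriction to Ω \ S
  have hb0 : ∀ᵐ t ∂((volume.restrict Ω).restrict (Ω \ S)), b t = 0 := by
    have hcoe : ∀ᵐ t ∂(volume.restrict Ω), b t = xdag t - xstar t := by
      filter_upwards [Lp.coeFn_sub xdag xstar] with t ht
      simpa [hb] using ht
    filter_upwards [ae_restrict_of_ae hcoe, hxdag0, hxstar] with t h1 h2 h3
    simp [h1, h2, h3]
  -- a + b = x - xstar
  have hsum : x - xstar = a + b := by rw [ha, hb]; abel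
  have hcoesum : ∀ᵐ t ∂(volume.restrict Ω), (x - xstar) t = a t + b t := by
    rw [hsum]; exact Lp.coeFn_add a b
  -- sqInt over Ω \ S of (x - xstar) equals that of a
  have hSc1 : sqInt Ω (Ω \ S) (x - xstar) = sqInt Ω (Ω \ S) a := by
    refine integral_congr_ae ?_
    filter_upwards [ae_restrict_of_ae hcoesum, hb0] with t h1 h2
    rw [h1, h2, add_zero]
  -- sqInt over Ω \ S of b is 0
  have hSc2 : sqInt Ω (Ω \ S) b = 0 := by
    have h0 : sqInt Ω (Ω \ S) b = ∫ t in Ω \ S, (0 : ℝ) ∂(volume.restrict Ω) := by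
      refine integral_congr_ae ?_
      filter_upwards [hb0] with t h
      simp [h]
    simp [h0]
  have hmeasSc : MeasurableSet (Ω \ S) := hΩmeas.diff hSmeas
  have habS : Integrable (fun t => a t * b t) (volume.restrict Ω) := hmul a b
  have haaS : Integrable (fun t => (a t) ^ 2) (volume.restrict Ω) := by
    simpa [pow_two] using hmul a a
  have hbbS : Integrable (fun t => (b t) ^ 2) (volume.restrict Ω) := by
    simpa [pow_two] using hmul b b
  -- expansion of the S-part
  have hSexp : sqInt Ω S (x - xstar) =
      sqInt Ω S a + 2 * (∫ t in S, a t * b t ∂(volume.restrict Ω)) + sqInt Ω S b := by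
    have h1 : sqInt Ω S (x - xstar)
        = ∫ t in S, ((a t) ^ 2 + 2 * (a t * b t) + (b t) ^ 2) ∂(volume.restrict Ω) := by
      refine integral_congr_ae ?_
      filter_upwards [ae_restrict_of_ae hcoesum] with t h1
      rw [h1]; ring
    have hI1 : Integrable (fun t => (a t) ^ 2 + 2 * (a t * b t)) (volume.restrict Ω) :=
      haaS.add (habS.const_mul 2)
    have hI2 : Integrable (fun t => 2 * (a t * b t)) (volume.restrict Ω) :=
      habS.const_mul 2
    rw [h1, integral_add hI1.integrableOn hbbS.integrableOn,
      integral_add haaS.integrableOn hI2.integrableOn,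
      MeasureTheory.integral_const_mul]
    rfl
  -- the S-integral of a*b is the full inner product
  have habSc : ∫ t in Ω \ S, a t * b t ∂(volume.restrict Ω) = 0 := by
    have h0 : ∫ t in Ω \ S, a t * b t ∂(volume.restrict Ω)
        = ∫ t in Ω \ S, (0 : ℝ) ∂(volume.restrict Ω) := by
      refine integral_congr_ae ?_
      filter_upwards [hb0] with t h
      simp [h]
    simp [h0]
  have hcover : S ∪ (Ω \ S) = Ω := by
    apply Set.Subset.antisymm
    · exact Set.union_subset hSΩ Set.diff_subset
    · intro t ht
      by_cases h : t ∈ S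
      · exact Or.inl h
      · exact Or.inr ⟨ht, h⟩
  have hres : (volume.restrict Ω).restrict (S ∪ (Ω \ S)) = volume.restrict Ω := by
    rw [hcover, Measure.restrict_restrict hΩmeas, Set.inter_self]
  have hsplit : ∫ t in S, a t * b t ∂(volume.restrict Ω) = ⟪a, b⟫ := by
    have hdisj : Disjoint S (Ω \ S) := Set.disjoint_sdiff_right
    have h2 : ∫ t, a t * b t ∂(volume.restrict Ω)
        = ∫ t in S ∪ (Ω \ S), a t * b t ∂(volume.restrict Ω) := by
      rw [hres]
    rw [hinner a b, h2,
      setIntegral_union hdisj hmeasSc habS.integrableOn habS.integrableOn,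
      habSc, add_zero]
  -- inner product rewriting for the goal
  have hgoalinner : ⟪xdag - xstar, xdag - x⟫ = -⟪a, b⟫ := by
    have h1 : xdag - x = -a := by rw [ha]; abel
    rw [← hb, h1, inner_neg_right, real_inner_comm]
  -- nonnegativity
  have hSb_nonneg : 0 ≤ sqInt Ω S b :=
    integral_nonneg fun t => sq_nonneg _
  -- the minimizer inequality
  have hmin : J Ω F xstar α S yδ x ≤ J Ω F xstar α S yδ xdag := hx.2 xdag hxdagD
  have hJdag : J Ω F xstar α S yδ xdag
      = ‖y - yδ‖ ^ 2 + α * sqInt Ω S b := by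
    have hxx : xdag - xstar = b := hb.symm
    simp only [J, hxdagF, hxx, hSc2, add_zero]
  have hδ : ‖y - yδ‖ ^ 2 ≤ δ ^ 2 := by
    have h0 : (0:ℝ) ≤ ‖y - yδ‖ := norm_nonneg _
    nlinarith
  have hJx : J Ω F xstar α S yδ x
      = ‖F x - yδ‖ ^ 2 +
        (α * (sqInt Ω S a + 2 * ⟪a, b⟫ + sqInt Ω S b) + sqInt Ω (Ω \ S) a) := by
    simp only [J, hSexp, hsplit, hSc1]
  rw [hJx, hJdag] at hmin
  have hS_a : sqInt Ω S (x - xdag) = sqInt Ω S a := by rw [ha]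
  have hSc_a : sqInt Ω (Ω \ S) (x - xdag) = sqInt Ω (Ω \ S) a := by rw [ha]
  rw [hS_a, hSc_a, hgoalinner]
  nlinarith [hmin, hδ, hSb_nonneg, hα.le]
end
end

section
/- (Localization of minimizers.) Let y ∈ Y, let x† ∈ D(F) satisfy F(x†) = y and x† = 0 a.e. on Ω∖S, and assume x* = 0 a.e. on Ω∖S. Let α : (0,∞) → (0,∞) satisfy α(δ) → 0 and δ²/α(δ) → 0 as δ → 0. Then for every ρ > 2‖x† − x*‖_{L²} there exists δ₀ > 0 such that for all 0 < δ ≤ δ₀, all y^δ ∈ Y with ‖y − y^δ‖_Y ≤ δ, and every minimizer x of J_{α(δ),S,y^δ} over D(F), one has ‖x − x†‖_{L²} < ρ. -/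
open MeasureTheory Filter
open scoped RealInnerProductSpace ENNReal Topology

noncomputable section

section AuxLocalization
variable {n : ℕ} {Ω : Set (Fin n → ℝ)}

private lemma aux_integrable_sq (v : Lp ℝ 2 (volume.restrict Ω)) :
    Integrable (fun t => (v t)^2) (volume.restrict Ω) := by
  have := MeasureTheory.L2.integrable_inner (𝕜 := ℝ) v v
  simpa [RCLike.inner_apply, pow_two] using this

private lemma aux_norm_sq_eq (v : Lp ℝ 2 (volume.restrict Ω)) :
    ‖v‖^2 = ∫ t, (v t)^2 ∂(volume.restrict Ω) := by
  rw [← real_inner_self_eq_norm_sq, MeasureTheory.L2.inner_def]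
  simp [RCLike.inner_apply, pow_two]

private lemma aux_sqInt_nonneg (T : Set (Fin n → ℝ)) (v : Lp ℝ 2 (volume.restrict Ω)) :
    0 ≤ sqInt Ω T v :=
  integral_nonneg fun t => sq_nonneg _

private lemma aux_restrict_compl_eq {S : Set (Fin n → ℝ)} (hΩ : MeasurableSet Ω) :
    ((volume : Measure (Fin n → ℝ)).restrict Ω).restrict Sᶜ
      = (volume.restrict Ω).restrict (Ω \ S) := by
  apply (Measure.restrict_congr_set _).symm
  rw [Filter.eventuallyEq_set]
  filter_upwards [self_mem_ae_restrict hΩ (μ := (volume : Measure (Fin n → ℝ)))] with t ht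
  simp [ht]

private lemma aux_sqInt_split (hΩ : MeasurableSet Ω) {S : Set (Fin n → ℝ)}
    (hS : MeasurableSet S) (v : Lp ℝ 2 (volume.restrict Ω)) :
    ‖v‖^2 = sqInt Ω S v + sqInt Ω (Ω \ S) v := by
  have h2 : sqInt Ω (Ω \ S) v = ∫ t in Sᶜ, (v t)^2 ∂(volume.restrict Ω) := by
    unfold sqInt
    rw [aux_restrict_compl_eq hΩ]
  rw [aux_norm_sq_eq v, h2, sqInt, ← integral_add_compl hS (aux_integrable_sq v)]

private lemma aux_sqInt_zero {S : Set (Fin n → ℝ)}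
    {a b : Lp ℝ 2 (volume.restrict Ω)} (ha : ZeroOff Ω S a) (hb : ZeroOff Ω S b) :
    sqInt Ω (Ω \ S) (a - b) = 0 := by
  have hsub : (↑(a - b) : (Fin n → ℝ) → ℝ) =ᵐ[(volume.restrict Ω).restrict (Ω \ S)]
      fun t => a t - b t :=
    ae_restrict_of_ae (Lp.coeFn_sub a b)
  have h0 : ∀ᵐ t ∂((volume.restrict Ω).restrict (Ω \ S)), ((a - b) t)^2 = 0 := by
    filter_upwards [hsub, ha, hb] with t h1 h2 h3
    rw [h1, h2, h3]; ring
  unfold sqInt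
  rw [integral_congr_ae h0, integral_zero]

end AuxLocalization

/-- **Localization of minimizers**: with `α(δ) → 0` and `δ²/α(δ) → 0` as
`δ → 0⁺`, for every `ρ > 2‖x† − x*‖` there is `δ₀ > 0` such that for all
`0 < δ ≤ δ₀`, all data `y^δ` with `‖y − y^δ‖ ≤ δ`, and every minimizer `x` of
`J_{α(δ),S,y^δ}` over `D(F)`, one has `‖x − x†‖ < ρ`. -/
theorem localization_of_minimizers
    {n : ℕ} (Ω : Set (Fin n → ℝ)) (hΩmeas : MeasurableSet Ω)
    (hΩbdd : Bornology.IsBounded Ω)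
    {Y : Type*} [NormedAddCommGroup Y] [InnerProductSpace ℝ Y] [CompleteSpace Y]
    (D : Set (Lp ℝ 2 (volume.restrict Ω))) (hD : D.Nonempty)
    (F : Lp ℝ 2 (volume.restrict Ω) → Y)
    (hFcont : ContinuousOn F D)
    (hFweak : ∀ (u : ℕ → Lp ℝ 2 (volume.restrict Ω))
      (x : Lp ℝ 2 (volume.restrict Ω)) (z : Y),
      (∀ k, u k ∈ D) → WeakConv u x → WeakConv (fun k => F (u k)) z →
        x ∈ D ∧ F x = z)
    (xstar : Lp ℝ 2 (volume.restrict Ω))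
    (S : Set (Fin n → ℝ)) (hSmeas : MeasurableSet S) (hSΩ : S ⊆ Ω)
    (hxstar : ZeroOff Ω S xstar)
    (y : Y)
    (xdag : Lp ℝ 2 (volume.restrict Ω)) (hxdagD : xdag ∈ D)
    (hxdagF : F xdag = y) (hxdag0 : ZeroOff Ω S xdag)
    (α : ℝ → ℝ) (hαpos : ∀ δ > (0 : ℝ), 0 < α δ)
    (hα0 : Tendsto α (𝓝[>] (0 : ℝ)) (𝓝 0))
    (hδ2α : Tendsto (fun δ => δ ^ 2 / α δ) (𝓝[>] (0 : ℝ)) (𝓝 0)) :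
    ∀ ρ > 2 * ‖xdag - xstar‖, ∃ δ₀ > (0 : ℝ), ∀ δ : ℝ, 0 < δ → δ ≤ δ₀ →
      ∀ yδ : Y, ‖y - yδ‖ ≤ δ →
        ∀ x : Lp ℝ 2 (volume.restrict Ω),
          IsMinimizer (J Ω F xstar (α δ) S yδ) D x → ‖x - xdag‖ < ρ := by
  intro ρ hρ
  set b := ‖xdag - xstar‖ with hb
  have hb0 : 0 ≤ b := norm_nonneg _
  have hρb0 : 0 < ρ - b := by linarith
  set ε := ((ρ - b)^2 - b^2) / 2 with hε
  have hε0 : 0 < ε := by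
    have h : b < ρ - b := by linarith
    have : b^2 < (ρ - b)^2 := by nlinarith
    rw [hε]; linarith
  have h1 : ∀ᶠ δ in 𝓝[>] (0:ℝ), α δ < 1 := hα0.eventually_lt_const one_pos
  have h2 : ∀ᶠ δ in 𝓝[>] (0:ℝ), δ^2 / α δ < ε := hδ2α.eventually_lt_const hε0
  have hev := h1.and h2
  rw [eventually_iff, mem_nhdsGT_iff_exists_Ioc_subset] at hev
  obtain ⟨δ₀, hδ₀, hsub⟩ := hev
  refine ⟨δ₀, hδ₀, ?_⟩
  intro δ hδ hδle yδ hyδ x hx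
  obtain ⟨hα1, hδε⟩ := hsub ⟨hδ, hδle⟩
  have haδ : 0 < α δ := hαpos δ hδ
  obtain ⟨hxD, hmin⟩ := hx
  have key := hmin xdag hxdagD
  have h0 : sqInt Ω (Ω \ S) (xdag - xstar) = 0 := aux_sqInt_zero hxdag0 hxstar
  have hsplitd := aux_sqInt_split hΩmeas hSmeas (xdag - xstar)
  have hJd : J Ω F xstar (α δ) S yδ xdag ≤ δ^2 + α δ * b^2 := by
    unfold J
    rw [h0, hxdagF]
    have hy1 : ‖y - yδ‖^2 ≤ δ^2 := by
      have h := norm_nonneg (y - yδ); nlinarith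
    have hy2 : sqInt Ω S (xdag - xstar) ≤ b^2 := by
      rw [h0] at hsplitd; rw [hb]; linarith
    nlinarith [haδ.le]
  set A := sqInt Ω S (x - xstar) with hA
  set B := sqInt Ω (Ω \ S) (x - xstar) with hB
  have hA0 : 0 ≤ A := aux_sqInt_nonneg _ _
  have hB0 : 0 ≤ B := aux_sqInt_nonneg _ _
  have hAB : α δ * A + B ≤ δ^2 + α δ * b^2 := by
    have hJx := le_trans key hJd
    unfold J at hJx
    have := sq_nonneg ‖F x - yδ‖
    linarith
  have hsplit : ‖x - xstar‖^2 = A + B := aux_sqInt_split hΩmeas hSmeas (x - xstar)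
  have hδ2 : δ^2 < ε * α δ := by
    rw [div_lt_iff₀ haδ] at hδε; linarith
  have hx2 : ‖x - xstar‖^2 < (ρ - b)^2 := by
    have h3 : α δ * (A + B) ≤ α δ * A + B := by nlinarith
    have h4 : α δ * (A + B) < α δ * (ε + b^2) := by nlinarith
    have h5 : A + B < ε + b^2 := lt_of_mul_lt_mul_left h4 haδ.le
    rw [hsplit]
    rw [hε] at h5
    linarith
  have hxlt : ‖x - xstar‖ < ρ - b := lt_of_pow_lt_pow_left₀ 2 hρb0.le hx2
  have htri : ‖x - xdag‖ ≤ ‖x - xstar‖ + b := by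
    have : x - xdag = (x - xstar) - (xdag - xstar) := by abel
    rw [this, hb]
    exact norm_sub_le _ _
  linarith
end
end
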